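/- arXiv:1706.09154 — 7 statements merged into one kernel-verified Lean document; each statement's English description precedes it below -/
import Mathlib

section
/- Let K and M be compact Hausdorff spaces and let f: M → K be a continuous surjection. If 𝒞 is a maximal chain of closed subsets of M, then f(𝒞) = {f(C) : C ∈ 𝒞} is a maximal chain of closed subsets of K. -/
/-- The image of a maximal chain of closed subsets under a continuous
surjection between compact Hausdorff spaces is a maximal chain of closed subsets. -/
theorem stmt_0 {M K : Type*} [TopologicalSpace M] [TopologicalSpace K]
    [CompactSpace M] [CompactSpace K] [T2Space M] [T2Space K]
    (f : M → K) (hf : Continuous f) (hsurj : Function.Surjective f)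
    (𝒞 : Set (Set M)) (hcl : ∀ C ∈ 𝒞, IsClosed C)
    (hchain : IsChain (· ⊆ ·) 𝒞)
    (hmax : ∀ C : Set M, IsClosed C → IsChain (· ⊆ ·) (insert C 𝒞) → C ∈ 𝒞) :
    (∀ D ∈ (Set.image f) '' 𝒞, IsClosed D) ∧
    IsChain (· ⊆ ·) ((Set.image f) '' 𝒞) ∧
    (∀ D : Set K, IsClosed D → IsChain (· ⊆ ·) (insert D ((Set.image f) '' 𝒞)) →
      D ∈ (Set.image f) '' 𝒞) := by
  refine ⟨?_, ?_, ?_⟩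
  · rintro D ⟨C, hC, rfl⟩
    exact (((hcl C hC).isCompact).image hf).isClosed
  · rintro D ⟨C, hC, rfl⟩ E ⟨C', hC', rfl⟩ hne
    by_cases h : C = C'
    · exact (hne (by rw [h])).elim
    rcases hchain hC hC' h with h' | h'
    · exact Or.inl (Set.image_mono (f := f) h')
    · exact Or.inr (Set.image_mono (f := f) h')
  · intro D hD hDchain
    by_cases hex : ∃ C ∈ 𝒞, f '' C = D
    · obtain ⟨C, hC, hCD⟩ := hex
      exact ⟨C, hC, hCD⟩
    push_neg at hex
    have hcomp : ∀ C ∈ 𝒞, f '' C ⊂ D ∨ D ⊂ f '' C := by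
      intro C hC
      have hne : D ≠ f '' C := fun h => hex C hC h.symm
      rcases hDchain (Set.mem_insert D _)
        (Set.mem_insert_of_mem _ ⟨C, hC, rfl⟩) hne with h | h
      · exact Or.inr ⟨h, fun h2 => hne (Set.Subset.antisymm h h2)⟩
      · exact Or.inl ⟨h, fun h2 => hne (Set.Subset.antisymm h2 h)⟩
    set 𝒞₁ : Set (Set M) := {C | C ∈ 𝒞 ∧ D ⊂ f '' C} with h𝒞₁
    set Cs : Set M := f ⁻¹' D ∩ ⋂₀ 𝒞₁ with hCs
    have hCs_closed : IsClosed Cs :=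
      (hD.preimage hf).inter (isClosed_sInter fun C hC => hcl C hC.1)
    -- every C with f '' C ⊂ D is contained in Cs
    have hsub0 : ∀ C ∈ 𝒞, f '' C ⊂ D → C ⊆ Cs := by
      intro C hC hCD
      apply Set.subset_inter
      · intro x hx
        exact hCD.1 ⟨x, hx, rfl⟩
      · intro x hx
        rw [Set.mem_sInter]
        intro C1 hC1
        by_cases h : C = C1
        · exact h ▸ hx
        rcases hchain hC hC1.1 h with h' | h'
        · exact h' hx
        · exact absurd ((Set.image_mono (f := f) h').trans hCD.1) hC1.2.2
    have hsub1 : ∀ C1 ∈ 𝒞₁, Cs ⊆ C1 := fun C1 hC1 =>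
      (Set.inter_subset_right).trans (Set.sInter_subset_of_mem hC1)
    -- f '' Cs = D
    have himg : f '' Cs = D := by
      apply Set.Subset.antisymm
      · rintro y ⟨x, hx, rfl⟩
        exact hx.1
      · intro k hk
        by_cases hne : 𝒞₁.Nonempty
        · have : Nonempty 𝒞₁ := hne.to_subtype
          have key : (⋂ C1 : 𝒞₁, (f ⁻¹' {k} ∩ C1.1)).Nonempty := by
            apply IsCompact.nonempty_iInter_of_directed_nonempty_isCompact_isClosed
            · rintro ⟨C1, hC1⟩ ⟨C2, hC2⟩
              by_cases h : C1 = C2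
              · exact ⟨⟨C1, hC1⟩, by subst h; exact ⟨le_refl _, le_refl _⟩⟩
              rcases hchain hC1.1 hC2.1 h with h' | h'
              · exact ⟨⟨C1, hC1⟩, le_refl _, Set.inter_subset_inter_right _ h'⟩
              · exact ⟨⟨C2, hC2⟩, Set.inter_subset_inter_right _ h', le_refl _⟩
            · rintro ⟨C1, hC1⟩
              obtain ⟨x, hx, hfx⟩ := hC1.2.1 hk
              exact ⟨x, hfx, hx⟩
            · rintro ⟨C1, hC1⟩
              exact ((isClosed_singleton.preimage hf).inter (hcl C1 hC1.1)).isCompact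
            · rintro ⟨C1, hC1⟩
              exact (isClosed_singleton.preimage hf).inter (hcl C1 hC1.1)
          obtain ⟨x, hx⟩ := key
          simp only [Set.mem_iInter, Set.mem_inter_iff, Set.mem_preimage,
            Set.mem_singleton_iff] at hx
          refine ⟨x, ⟨?_, ?_⟩, (hx ⟨_, (hne.some_mem)⟩).1⟩
          · have := (hx ⟨_, hne.some_mem⟩).1
            simp only [Set.mem_preimage, this]
            exact hk
          · rw [Set.mem_sInter]
            intro C1 hC1
            exact (hx ⟨C1, hC1⟩).2
        · rw [Set.not_nonempty_iff_eq_empty] at hne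
          obtain ⟨x, hfx⟩ := hsurj k
          refine ⟨x, ⟨?_, ?_⟩, hfx⟩
          · simp [Set.mem_preimage, hfx, hk]
          · rw [hne]; simp
    -- insert Cs 𝒞 is a chain
    have hchain' : IsChain (· ⊆ ·) (insert Cs 𝒞) := by
      intro A hA B hB hAB
      rcases hA with rfl | hA
      · rcases hB with rfl | hB
        · exact (hAB rfl).elim
        · rcases hcomp B hB with h | h
          · exact Or.inr (hsub0 B hB h)
          · exact Or.inl (hsub1 B ⟨hB, h⟩)
      · rcases hB with rfl | hB
        · rcases hcomp A hA with h | h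
          · exact Or.inl (hsub0 A hA h)
          · exact Or.inr (hsub1 A ⟨hA, h⟩)
        · exact hchain hA hB hAB
    exact ⟨Cs, hmax Cs hCs_closed hchain', himg⟩
end

section
/- Let (Aₙ)ₙ be a sequence of finite fans with epimorphisms fⁿ⁺¹ₙ: Aₙ₊₁ → Aₙ, let P ⊆ ∏ₙ Aₙ be the inverse limit (each Aₙ discrete, P with the subspace topology of the product) with projection maps f^∞ₙ: P → Aₙ, and define the partial order x ⪯_P y iff f^∞ₙ(x) ⪯_{Aₙ} f^∞ₙ(y) for every n. Then every chain of downwards closed closed subsets of P that is maximal among chains of downwards closed closed subsets is in fact a maximal chain of closed subsets of P (i.e., no closed set whatsoever can be added to it keeping it a chain). -/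
/-- A finite fan: a finite poset with a least element (the root) such that the
set of predecessors of any element is linearly ordered, and the set of successors
of any non-root element is linearly ordered. -/
structure FiniteFan where
  carrier : Type
  fintype : Fintype carrier
  ord : PartialOrder carrier
  root : carrier
  root_le : ∀ a : carrier, ord.le root a
  down_chain : ∀ a x y : carrier, ord.le x a → ord.le y a → ord.le x y ∨ ord.le y x
  up_chain : ∀ a : carrier, a ≠ root →
    ∀ x y : carrier, ord.le a x → ord.le a y → ord.le x y ∨ ord.le y x

attribute [instance] FiniteFan.fintype

/-- `t` is an immediate successor of `s` in the fan `A`. -/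
def FiniteFan.covby (A : FiniteFan) (s t : A.carrier) : Prop :=
  A.ord.lt s t ∧ ∀ p : A.carrier, A.ord.lt s p → ¬ A.ord.lt p t

/-- The relation `R^A` : `R^A(s,t)` iff `s = t` or `t` is an immediate successor of `s`. -/
def FiniteFan.R (A : FiniteFan) (s t : A.carrier) : Prop :=
  s = t ∨ A.covby s t

/-- An epimorphism of finite fans: a surjection with `R^B(s,t) → R^A(φ s, φ t)`. -/
def FanEpi (B A : FiniteFan) (φ : B.carrier → A.carrier) : Prop :=
  Function.Surjective φ ∧ ∀ s t : B.carrier, B.R s t → A.R (φ s) (φ t)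

/-- A downwards closed subset of a finite fan. -/
def FiniteFan.DownClosed (A : FiniteFan) (C : Set A.carrier) : Prop :=
  ∀ x y : A.carrier, A.ord.le x y → y ∈ C → x ∈ C

/-- A downwards closed maximal chain on a finite fan: a family of downwards closed
subsets linearly ordered by inclusion, maximal among such families. -/
def DCMaxChain (A : FiniteFan) (𝒞 : Set (Set A.carrier)) : Prop :=
  (∀ C ∈ 𝒞, A.DownClosed C) ∧ IsChain (· ⊆ ·) 𝒞 ∧
  ∀ C : Set A.carrier, A.DownClosed C → IsChain (· ⊆ ·) (insert C 𝒞) → C ∈ 𝒞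

/-- An epimorphism in the class `F_c`: a fan epimorphism mapping the chain onto the chain. -/
def FcEpi (B A : FiniteFan) (𝒞B : Set (Set B.carrier)) (𝒞A : Set (Set A.carrier))
    (φ : B.carrier → A.carrier) : Prop :=
  FanEpi B A φ ∧ (Set.image φ) '' 𝒞B = 𝒞A

/-- A branch of a fan: a maximal linearly ordered subset. -/
def FiniteFan.IsBranch (A : FiniteFan) (b : Set A.carrier) : Prop :=
  IsChain A.ord.le b ∧ ∀ b' : Set A.carrier, IsChain A.ord.le b' → b ⊆ b' → b' = b

/-- The height of a finite fan: the maximal `n` such that some branch has `n+1` elements. -/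
noncomputable def FiniteFan.height (A : FiniteFan) : ℕ :=
  sSup {n : ℕ | ∃ b : Set A.carrier, A.IsBranch b ∧ b.ncard = n + 1}

/-- The width of a finite fan: the number of its branches. -/
noncomputable def FiniteFan.width (A : FiniteFan) : ℕ :=
  {b : Set A.carrier | A.IsBranch b}.ncard

/-- A chain on a finite fan is canonical if there is an enumeration `b₁,…,bₙ` of the
branches such that whenever `C` is in the chain and `C ∩ b_j ≠ ∅`, then `b_i ⊆ C`
for all `i < j`. -/
def Canonical (A : FiniteFan) (𝒞 : Set (Set A.carrier)) : Prop :=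
  ∃ (n : ℕ) (b : Fin n → Set A.carrier),
    (∀ i, A.IsBranch (b i)) ∧ Function.Injective b ∧
    (∀ b' : Set A.carrier, A.IsBranch b' → ∃ i, b' = b i) ∧
    ∀ C ∈ 𝒞, ∀ i j : Fin n, i < j → (C ∩ b j).Nonempty → b i ⊆ C

/-- Membership in the class `F_cc`: a downwards closed maximal chain which is canonical,
on a fan all of whose branches have the same height. -/
def Fcc (A : FiniteFan) (𝒞 : Set (Set A.carrier)) : Prop :=
  DCMaxChain A 𝒞 ∧ Canonical A 𝒞 ∧ ∃ k : ℕ, ∀ b : Set A.carrier, A.IsBranch b → b.ncard = k + 1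

/-- Finite fans carry the discrete topology. -/
instance (A : FiniteFan) : TopologicalSpace A.carrier := ⊥

instance (A : FiniteFan) : DiscreteTopology A.carrier := ⟨rfl⟩

/-- The inverse limit of a sequence of finite fans along the maps `f n`. -/
def InvLim (A : ℕ → FiniteFan) (f : ∀ n, (A (n + 1)).carrier → (A n).carrier) : Type :=
  { x : ∀ n, (A n).carrier // ∀ n, f n (x (n + 1)) = x n }

/-- The inverse limit carries the topology inherited from the product of the discrete
spaces `A n`. -/
instance (A : ℕ → FiniteFan) (f : ∀ n, (A (n + 1)).carrier → (A n).carrier) :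
    TopologicalSpace (InvLim A f) :=
  inferInstanceAs (TopologicalSpace { x : ∀ n, (A n).carrier // ∀ n, f n (x (n + 1)) = x n })

/-- The partial order on the inverse limit: `x ⪯_P y` iff the projections satisfy
`x n ⪯_{Aₙ} y n` for every `n`. -/
def InvLim.le (A : ℕ → FiniteFan) (f : ∀ n, (A (n + 1)).carrier → (A n).carrier)
    (x y : InvLim A f) : Prop :=
  ∀ n, (A n).ord.le (x.1 n) (y.1 n)

/-- A downwards closed subset of the inverse limit. -/
def InvLim.DownClosed (A : ℕ → FiniteFan) (f : ∀ n, (A (n + 1)).carrier → (A n).carrier)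
    (C : Set (InvLim A f)) : Prop :=
  ∀ x y : InvLim A f, InvLim.le A f x y → y ∈ C → x ∈ C

section Aux

/-- `R` implies `≤`. -/
lemma fanR_le {A : FiniteFan} {s t : A.carrier} (h : A.R s t) : A.ord.le s t := by
  letI := A.ord
  rcases h with rfl | h
  · exact le_rfl
  · exact le_of_lt h.1

/-- Fan epimorphisms are monotone. -/
lemma FanEpi.mono {B A : FiniteFan} {φ : B.carrier → A.carrier} (h : FanEpi B A φ) :
    ∀ s t : B.carrier, B.ord.le s t → A.ord.le (φ s) (φ t) := by
  letI := A.ord; letI := B.ord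
  classical
  suffices H : ∀ (N : ℕ) (s t : B.carrier), s ≤ t →
      (Finset.univ.filter (fun u => s < u ∧ u ≤ t)).card ≤ N → φ s ≤ φ t by
    intro s t hst; exact H _ s t hst le_rfl
  intro N
  induction N with
  | zero =>
    intro s t hst hcard
    rcases eq_or_lt_of_le hst with rfl | hlt
    · exact le_rfl
    · exfalso
      have ht : t ∈ Finset.univ.filter (fun u => s < u ∧ u ≤ t) := by
        simp [hlt]
      have := Finset.card_pos.mpr ⟨t, ht⟩
      omega
  | succ N ih =>
    intro s t hst hcard
    rcases eq_or_lt_of_le hst with rfl | hlt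
    · exact le_rfl
    · set F := Finset.univ.filter (fun u => s < u ∧ u ≤ t) with hF
      have hne : F.Nonempty := ⟨t, by simp [hF, hlt]⟩
      obtain ⟨u, huF, hmin⟩ := F.exists_minimal hne
      have hu : s < u ∧ u ≤ t := by simpa [hF] using huF
      have hcov : B.R s u := by
        refine Or.inr ⟨hu.1, fun p hsp hpu => ?_⟩
        exact absurd (hmin (by simp [hF, hsp, le_trans (le_of_lt hpu) hu.2]) (le_of_lt hpu)) (not_le_of_gt hpu)
      have h1 : φ s ≤ φ u := fanR_le (h.2 s u hcov)
      have hsub : Finset.univ.filter (fun v => u < v ∧ v ≤ t) ⊆ F := by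
        intro v hv
        simp only [Finset.mem_filter, Finset.mem_univ, true_and] at hv
        simp only [hF, Finset.mem_filter, Finset.mem_univ, true_and]
        exact ⟨lt_trans hu.1 hv.1, hv.2⟩
      have hss : Finset.univ.filter (fun v => u < v ∧ v ≤ t) ⊂ F :=
        (Finset.ssubset_iff_of_subset hsub).mpr ⟨u, huF, by simp⟩
      have hcard' := Finset.card_lt_card hss
      have h2 : φ u ≤ φ t := ih u t hu.2 (by omega)
      exact le_trans h1 h2

/-- Fan epimorphisms map root to root. -/
lemma FanEpi.root_eq {B A : FiniteFan} {φ : B.carrier → A.carrier} (h : FanEpi B A φ) :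
    φ B.root = A.root := by
  obtain ⟨b, hb⟩ := h.1 A.root
  refine A.ord.le_antisymm _ _ ?_ (A.root_le _)
  have := h.mono B.root b (B.root_le b)
  rwa [hb] at this

/-- The downward lifting property of fan epimorphisms. -/
lemma FanEpi.lift {B A : FiniteFan} {φ : B.carrier → A.carrier} (h : FanEpi B A φ) :
    ∀ (t : B.carrier) (a : A.carrier), A.ord.le a (φ t) →
      ∃ s : B.carrier, B.ord.le s t ∧ φ s = a := by
  letI := A.ord; letI := B.ord
  classical
  suffices H : ∀ (N : ℕ) (t : B.carrier) (a : A.carrier), a ≤ φ t →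
      (Finset.univ.filter (fun u => u < t)).card ≤ N → ∃ s, s ≤ t ∧ φ s = a by
    intro t a ha; exact H _ t a ha le_rfl
  intro N
  induction N with
  | zero =>
    intro t a ha hcard
    rcases eq_or_lt_of_le ha with rfl | hlt
    · exact ⟨t, le_rfl, rfl⟩
    · exfalso
      have htroot : t = B.root := by
        by_contra hne
        have hr : B.root < t := lt_of_le_of_ne (B.root_le t) (Ne.symm hne)
        have : B.root ∈ Finset.univ.filter (fun u => u < t) := by simp [hr]
        have := Finset.card_pos.mpr ⟨B.root, this⟩
        omega
      rw [htroot, h.root_eq] at hlt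
      exact absurd (A.root_le a) (not_le_of_gt hlt)
  | succ N ih =>
    intro t a ha hcard
    rcases eq_or_lt_of_le ha with rfl | hlt
    · exact ⟨t, le_rfl, rfl⟩
    have htroot : t ≠ B.root := by
      intro hr
      rw [hr, h.root_eq] at hlt
      exact absurd (A.root_le a) (not_le_of_gt hlt)
    set F := Finset.univ.filter (fun u => u < t) with hF
    have hne : F.Nonempty :=
      ⟨B.root, by simp [hF, lt_of_le_of_ne (B.root_le t) (Ne.symm htroot)]⟩
    obtain ⟨u, huF, hmax'⟩ := F.exists_maximal hne
    have hu : u < t := by simpa [hF] using huF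
    have hcov : B.R u t := by
      refine Or.inr ⟨hu, fun p hup hpt => ?_⟩
      exact absurd (hmax' (by simp [hF, hpt]) (le_of_lt hup)) (not_le_of_gt hup)
    have hsub0 : Finset.univ.filter (fun v => v < u) ⊆ F := by
      intro v hv
      simp only [Finset.mem_filter, Finset.mem_univ, true_and] at hv
      simp only [hF, Finset.mem_filter, Finset.mem_univ, true_and]
      exact lt_trans hv hu
    have hsub : Finset.univ.filter (fun v => v < u) ⊂ F :=
      (Finset.ssubset_iff_of_subset hsub0).mpr ⟨u, huF, by simp⟩
    have hcard' := Finset.card_lt_card hsub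
    rcases h.2 u t hcov with heq | hcovA
    · obtain ⟨s, hs, hsa⟩ := ih u a (by rw [heq]; exact ha) (by omega)
      exact ⟨s, le_trans hs (le_of_lt hu), hsa⟩
    · rcases A.down_chain (φ t) a (φ u) ha (le_of_lt hcovA.1) with hau | hua
      · obtain ⟨s, hs, hsa⟩ := ih u a hau (by omega)
        exact ⟨s, le_trans hs (le_of_lt hu), hsa⟩
      · have : φ u = a := by
          by_contra hne2
          exact hcovA.2 a (lt_of_le_of_ne hua hne2) hlt
        exact ⟨u, le_of_lt hu, this⟩

/-- Dependent choice along `ℕ`. -/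
lemma depChoice {W : ℕ → Type} (w0 : W 0) (R : ∀ m, W m → W (m + 1) → Prop)
    (h : ∀ m (x : W m), ∃ y, R m x y) :
    ∃ w : ∀ m, W m, w 0 = w0 ∧ ∀ m, R m (w m) (w (m + 1)) := by
  refine ⟨fun m => Nat.rec w0 (fun m x => Classical.choose (h m x)) m, rfl, fun m => ?_⟩
  exact Classical.choose_spec (h m _)

/-- Lifting points of the inverse limit downward through a projection. -/
lemma lift_P : ∀ (n : ℕ) (A : ℕ → FiniteFan)
    (f : ∀ k, (A (k + 1)).carrier → (A k).carrier),
    (∀ k, FanEpi (A (k + 1)) (A k) (f k)) →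
    ∀ (y : InvLim A f) (a : (A n).carrier), (A n).ord.le a (y.1 n) →
      ∃ z : InvLim A f, InvLim.le A f z y ∧ z.1 n = a := by
  intro n
  induction n with
  | zero =>
    intro A f hf y a ha
    obtain ⟨w, hw0, hwR⟩ := depChoice (W := fun m => {c : (A m).carrier // (A m).ord.le c (y.1 m)})
      ⟨a, ha⟩ (fun m c c' => f m c'.1 = c.1)
      (fun m c => by
        have hx : (A m).ord.le c.1 (f m (y.1 (m + 1))) := by
          rw [y.2 m]; exact c.2
        obtain ⟨s, hs, hsa⟩ := (hf m).lift (y.1 (m + 1)) c.1 hx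
        exact ⟨⟨s, hs⟩, hsa⟩)
    refine ⟨⟨fun m => (w m).1, fun m => hwR m⟩, fun m => (w m).2, ?_⟩
    show (w 0).1 = a
    rw [hw0]
  | succ n ih =>
    intro A f hf y a ha
    obtain ⟨z', hz'le, hz'n⟩ := ih (fun k => A (k + 1)) (fun k => f (k + 1))
      (fun k => hf (k + 1))
      ⟨fun k => y.1 (k + 1), fun k => y.2 (k + 1)⟩ a ha
    refine ⟨⟨fun k => Nat.casesOn k (f 0 (z'.1 0)) (fun j => z'.1 j),
      fun k => ?_⟩, fun k => ?_, hz'n⟩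
    · cases k with
      | zero => rfl
      | succ j => exact z'.2 j
    · cases k with
      | zero =>
        have h0 := (hf 0).mono (z'.1 0) (y.1 1) (hz'le 0)
        rw [y.2 0] at h0
        exact h0
      | succ j => exact hz'le j

/-- If two points agree at coordinate `m`, they agree at all coordinates below. -/
lemma agree_below {A : ℕ → FiniteFan} {f : ∀ k, (A (k + 1)).carrier → (A k).carrier}
    (z x : InvLim A f) :
    ∀ m k, k ≤ m → z.1 m = x.1 m → z.1 k = x.1 k := by
  intro m
  induction m with
  | zero => intro k hk h; interval_cases k; exact h
  | succ m ih =>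
    intro k hk h
    rcases Nat.eq_or_lt_of_le hk with rfl | hk'
    · exact h
    · exact ih k (Nat.lt_succ_iff.mp hk') (by rw [← z.2 m, ← x.2 m, h])

/-- The closure of a downwards closed subset of the inverse limit is downwards closed. -/
lemma closure_dc (A : ℕ → FiniteFan) (f : ∀ k, (A (k + 1)).carrier → (A k).carrier)
    (hf : ∀ k, FanEpi (A (k + 1)) (A k) (f k)) (S : Set (InvLim A f))
    (hS : InvLim.DownClosed A f S) : InvLim.DownClosed A f (closure S) := by
  intro x y hxy hy
  rw [mem_closure_iff] at hy ⊢
  intro o ho hxo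
  obtain ⟨O, hO, hOo⟩ := isOpen_induced_iff.mp ho
  have hxO : x.1 ∈ O := by rw [← hOo] at hxo; exact hxo
  obtain ⟨I, u, hIu, hpi⟩ := isOpen_pi_iff.mp hO x.1 hxO
  set n := I.sup id with hn
  have hVopen : IsOpen {z : InvLim A f | z.1 n = y.1 n} := by
    have : {z : InvLim A f | z.1 n = y.1 n} =
        (fun z : InvLim A f => z.1 n) ⁻¹' {y.1 n} := rfl
    rw [this]
    exact IsOpen.preimage ((continuous_apply n).comp continuous_subtype_val)
      (isOpen_discrete _)
  obtain ⟨y', hy'V, hy'S⟩ := hy _ hVopen rfl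
  have hxy' : (A n).ord.le (x.1 n) (y'.1 n) := by
    rw [hy'V]; exact hxy n
  obtain ⟨z, hzle, hzn⟩ := lift_P n A f hf y' (x.1 n) hxy'
  refine ⟨z, ?_, hS z y' hzle hy'S⟩
  rw [← hOo]
  apply hpi
  intro i hi
  have : z.1 i = x.1 i := agree_below z x n i (Finset.le_sup (f := id) hi) hzn
  rw [this]
  exact (hIu i hi).2

end Aux

/-- On the inverse limit `P` of a sequence of finite fans, every chain of
downwards closed closed subsets which is maximal among such chains is a maximal chain
of closed subsets of `P`. -/
theorem stmt_1 (A : ℕ → FiniteFan) (f : ∀ n, (A (n + 1)).carrier → (A n).carrier)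
    (hf : ∀ n, FanEpi (A (n + 1)) (A n) (f n))
    (𝒞 : Set (Set (InvLim A f)))
    (hmem : ∀ C ∈ 𝒞, IsClosed C ∧ InvLim.DownClosed A f C)
    (hchain : IsChain (· ⊆ ·) 𝒞)
    (hmax : ∀ C : Set (InvLim A f), IsClosed C → InvLim.DownClosed A f C →
      IsChain (· ⊆ ·) (insert C 𝒞) → C ∈ 𝒞) :
    ∀ C : Set (InvLim A f), IsClosed C → IsChain (· ⊆ ·) (insert C 𝒞) → C ∈ 𝒞 := by
  intro C hC hchainC
  classical
  have hcomp : ∀ F ∈ 𝒞, F ⊆ C ∨ C ⊆ F := by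
    intro F hF
    by_cases hFC : F = C
    · exact Or.inl (hFC ▸ subset_rfl)
    · exact hchainC (Set.mem_insert_iff.mpr (Or.inr hF)) (Set.mem_insert _ _) hFC
  -- the smallest member of the chain above C
  set U : Set (InvLim A f) := ⋂₀ {E | E ∈ 𝒞 ∧ C ⊆ E} with hUdef
  have hUclosed : IsClosed U := isClosed_sInter (fun E hE => (hmem E hE.1).1)
  have hUdc : InvLim.DownClosed A f U := by
    intro x y hxy hy E hE
    exact (hmem E hE.1).2 x y hxy (hy E hE)
  have hCU : C ⊆ U := Set.subset_sInter (fun E hE => hE.2)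
  have hUcompat : ∀ F ∈ 𝒞, F ⊆ U ∨ U ⊆ F := by
    intro F hF
    rcases hcomp F hF with h | h
    · exact Or.inl (Set.subset_sInter (fun E hE => h.trans hE.2))
    · exact Or.inr (Set.sInter_subset_of_mem ⟨hF, h⟩)
  have hUmem : U ∈ 𝒞 :=
    hmax U hUclosed hUdc (hchain.insert (fun F hF _ => ((hUcompat F hF).symm.imp id id)))
  -- the largest member of the chain below C
  set D : Set (InvLim A f) := closure (⋃₀ {E | E ∈ 𝒞 ∧ E ⊆ C}) with hDdef
  have hDC : D ⊆ C := closure_minimal (Set.sUnion_subset fun E hE => hE.2) hC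
  have hDdc : InvLim.DownClosed A f D := by
    apply closure_dc A f hf
    intro x y hxy hy
    obtain ⟨E, hE, hyE⟩ := hy
    exact ⟨E, hE, (hmem E hE.1).2 x y hxy hyE⟩
  have hDclosed : IsClosed D := isClosed_closure
  have hDcompat : ∀ F ∈ 𝒞, F ⊆ D ∨ U ⊆ F := by
    intro F hF
    rcases hcomp F hF with h | h
    · have hFm : F ∈ {E : Set (InvLim A f) | E ∈ 𝒞 ∧ E ⊆ C} := ⟨hF, h⟩
      exact Or.inl ((Set.subset_sUnion_of_mem hFm).trans subset_closure)
    · exact Or.inr (Set.sInter_subset_of_mem ⟨hF, h⟩)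
  have hDU : D ⊆ U := hDC.trans hCU
  have hDmem : D ∈ 𝒞 := by
    refine hmax D hDclosed hDdc (hchain.insert (fun F hF _ => ?_))
    rcases hDcompat F hF with h | h
    · exact Or.inr h
    · exact Or.inl (hDU.trans h)
  by_cases hCD : C ⊆ D
  · have : C = D := Set.Subset.antisymm hCD hDC
    rw [this]; exact hDmem
  by_cases hUC : U ⊆ C
  · have : C = U := Set.Subset.antisymm hCU hUC
    rw [this]; exact hUmem
  obtain ⟨p, hpC, hpD⟩ := Set.not_subset.mp hCD
  obtain ⟨q, hqU, hqC⟩ := Set.not_subset.mp hUC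
  -- principal downsets are closed
  have hdown : ∀ r : InvLim A f, IsClosed {z : InvLim A f | InvLim.le A f z r} := by
    intro r
    have : {z : InvLim A f | InvLim.le A f z r} =
        ⋂ k, (fun z : InvLim A f => z.1 k) ⁻¹' {c | (A k).ord.le c (r.1 k)} := by
      ext z
      simp only [Set.mem_iInter, Set.mem_preimage, Set.mem_setOf_eq]
      exact Iff.rfl
    rw [this]
    exact isClosed_iInter fun k =>
      IsClosed.preimage ((continuous_apply k).comp continuous_subtype_val)
        (isClosed_discrete _)
  -- the key step: U is covered by D together with any single principal downset
  have key : ∀ r : InvLim A f, r ∈ U → r ∉ D →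
      U ⊆ D ∪ {z : InvLim A f | InvLim.le A f z r} := by
    intro r hrU hrD
    set G : Set (InvLim A f) := D ∪ {z : InvLim A f | InvLim.le A f z r} with hGdef
    have hGclosed : IsClosed G := hDclosed.union (hdown r)
    have hGdc : InvLim.DownClosed A f G := by
      intro x y hxy hy
      rcases hy with h | h
      · exact Or.inl (hDdc x y hxy h)
      · exact Or.inr (fun n => (A n).ord.le_trans _ _ _ (hxy n) (h n))
    have hGU : G ⊆ U := by
      refine Set.union_subset hDU (fun z hz => hUdc z r hz hrU)
    have hGchain : IsChain (· ⊆ ·) (insert G 𝒞) := by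
      refine hchain.insert (fun F hF _ => ?_)
      rcases hDcompat F hF with h | h
      · exact Or.inr (h.trans Set.subset_union_left)
      · exact Or.inl (hGU.trans h)
    have hGmem : G ∈ 𝒞 := hmax G hGclosed hGdc hGchain
    rcases hDcompat G hGmem with h | h
    · exfalso
      have hrG : r ∈ G := Or.inr (fun n => (A n).ord.le_refl _)
      exact hrD (h hrG)
    · exact h
  have hpU : p ∈ U := hCU hpC
  have hqD : q ∉ D := fun h => hqC (hDC h)
  have h1 := key p hpU hpD hqU
  have h2 := key q hqU hqD hpU
  rcases h1 with h | hqp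
  · exact absurd h hqD
  rcases h2 with h | hpq
  · exact absurd h hpD
  have hpqeq : p = q :=
    Subtype.ext (funext fun n => (A n).ord.le_antisymm _ _ (hpq n) (hqp n))
  exact absurd (hpqeq ▸ hpC) hqC
end

section
/- Let G be a Polish group and H a closed subgroup of G. Equip G/H with the quotient of the right uniformity of G, i.e., the uniformity generated by the sets U_V = {(xH, yH) : x y⁻¹ ∈ V} for V an open symmetric neighbourhood of the identity of G. If G/H is precompact, then the continuous action of G on G/H by left translations, g·(xH) = (gx)H, extends to a continuous action of G on the completion of the uniform space G/H. -/
open UniformSpace Filter Set Topology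
open scoped Uniformity

lemma aux_closure_image_entourage {α : Type*} [UniformSpace α] {W : Set (α × α)} (hW : W ∈ 𝓤 α) :
    closure ((fun p : α × α => ((p.1 : Completion α), (p.2 : Completion α))) '' W)
      ∈ 𝓤 (Completion α) := by
  rw [← Completion.comap_coe_eq_uniformity, mem_comap] at hW
  obtain ⟨S, hS, hSW⟩ := hW
  obtain ⟨T₀, hT₀, hT₀S⟩ := comp_mem_uniformity_sets hS
  obtain ⟨T₁, hT₁, hT₁T₀⟩ := comp_mem_uniformity_sets hT₀
  obtain ⟨T, ⟨hT, hTo, hTsymm⟩, hTsub⟩ :=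
    (uniformity_hasBasis_open_symmetric.mem_iff).1 (inter_mem hT₀ hT₁)
  refine mem_of_superset hT fun p hp => ?_
  rw [mem_closure_iff_nhds]
  intro N hN
  rw [nhds_prod_eq, mem_prod_iff] at hN
  obtain ⟨N₁, hN₁, N₂, hN₂, hNsub⟩ := hN
  obtain ⟨a, ha⟩ := Completion.denseRange_coe.mem_nhds
    (inter_mem hN₁ (UniformSpace.ball_mem_nhds p.1 hT))
  obtain ⟨b, hb⟩ := Completion.denseRange_coe.mem_nhds
    (inter_mem hN₂ (UniformSpace.ball_mem_nhds p.2 hT))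
  refine ⟨((a : Completion α), (b : Completion α)), hNsub ⟨ha.1, hb.1⟩, ?_⟩
  refine ⟨(a, b), hSW ?_, rfl⟩
  have h1 : ((a : Completion α), p.1) ∈ T := hTsymm.symm _ _ ha.2
  have h3 : (p.2, (b : Completion α)) ∈ T := hb.2
  have hac : ((a : Completion α), p.2) ∈ T₀ :=
    hT₁T₀ ⟨p.1, (hTsub h1).2, (hTsub hp).2⟩
  exact hT₀S ⟨p.2, hac, (hTsub h3).1⟩

/-- Let `G` be a Polish group and `H` a closed subgroup. Equip `G/H` with
the quotient of the right uniformity of `G`, i.e. the uniformity whose entourages are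
exactly the supersets of the sets `U_V = {(xH, yH) : x y⁻¹ ∈ V}` for `V` an open
symmetric neighbourhood of the identity. If `G/H` is precompact (totally bounded),
then the action of `G` on `G/H` by left translations extends to a continuous action
of `G` on the completion of `G/H`. -/
theorem stmt_3 {G : Type*} [Group G] [TopologicalSpace G] [IsTopologicalGroup G]
    [PolishSpace G] (H : Subgroup G) (hH : IsClosed (H : Set G))
    [u : UniformSpace (G ⧸ H)]
    (hu : ∀ S : Set ((G ⧸ H) × (G ⧸ H)),
      S ∈ uniformity (G ⧸ H) ↔
        ∃ V : Set G, IsOpen V ∧ (1 : G) ∈ V ∧ (∀ g ∈ V, g⁻¹ ∈ V) ∧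
          {p : (G ⧸ H) × (G ⧸ H) |
            ∃ x y : G, (x : G ⧸ H) = p.1 ∧ (y : G ⧸ H) = p.2 ∧ x * y⁻¹ ∈ V} ⊆ S)
    (hpre : TotallyBounded (Set.univ : Set (G ⧸ H))) :
    ∃ a : G → UniformSpace.Completion (G ⧸ H) → UniformSpace.Completion (G ⧸ H),
      Continuous (fun p : G × UniformSpace.Completion (G ⧸ H) => a p.1 p.2) ∧
      (∀ g₁ g₂ : G, ∀ x : UniformSpace.Completion (G ⧸ H), a (g₁ * g₂) x = a g₁ (a g₂ x)) ∧
      (∀ x : UniformSpace.Completion (G ⧸ H), a 1 x = x) ∧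
      ∀ g x : G, a g (((x : G ⧸ H) : UniformSpace.Completion (G ⧸ H))) =
        (((g * x : G) : G ⧸ H) : UniformSpace.Completion (G ⧸ H)) := by
  classical
  -- each translation is uniformly continuous
  have huc : ∀ g : G, UniformContinuous (fun q : G ⧸ H => g • q) := by
    intro g
    rw [uniformContinuous_def]
    intro S hS
    obtain ⟨V, hVo, hV1, hVs, hVsub⟩ := (hu S).1 hS
    refine (hu _).2 ⟨(fun h : G => g * h * g⁻¹) ⁻¹' V, ?_, ?_, ?_, ?_⟩
    · exact hVo.preimage (by fun_prop)
    · simpa using hV1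
    · intro h hh
      have : (g * h * g⁻¹)⁻¹ ∈ V := hVs _ hh
      simpa [mul_inv_rev, mul_assoc] using this
    · rintro p ⟨x, y, hx, hy, hxy⟩
      refine hVsub ⟨g * x, g * y, ?_, ?_, ?_⟩
      · rw [← hx]; rfl
      · rw [← hy]; rfl
      · have h : (g * x) * (g * y)⁻¹ = g * (x * y⁻¹) * g⁻¹ := by group
        rw [h]; exact hxy
  set a : G → Completion (G ⧸ H) → Completion (G ⧸ H) :=
    fun g => Completion.map (fun q : G ⧸ H => g • q) with ha
  have hacoe : ∀ (g : G) (q : G ⧸ H), a g (q : Completion (G ⧸ H)) =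
      ((g • q : G ⧸ H) : Completion (G ⧸ H)) := fun g q => Completion.map_coe (huc g) q
  have hamul : ∀ g₁ g₂ : G, ∀ x : Completion (G ⧸ H), a (g₁ * g₂) x = a g₁ (a g₂ x) := by
    intro g₁ g₂ x
    have h : (fun q : G ⧸ H => (g₁ * g₂) • q) =
        (fun q : G ⧸ H => g₁ • q) ∘ (fun q : G ⧸ H => g₂ • q) :=
      funext fun q => mul_smul g₁ g₂ q
    show Completion.map _ x = _
    rw [h, ← Completion.map_comp (huc g₁) (huc g₂)]
    rfl
  have haone : ∀ x : Completion (G ⧸ H), a 1 x = x := by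
    intro x
    have h : (fun q : G ⧸ H => (1 : G) • q) = (id : G ⧸ H → G ⧸ H) :=
      funext fun q => one_smul G q
    show Completion.map _ x = x
    rw [h, Completion.map_id, id_eq]
  refine ⟨a, ?_, hamul, haone, fun g x => (hacoe g x).trans rfl⟩
  -- joint continuity
  rw [continuous_iff_continuousAt]
  rintro ⟨g₀, ξ₀⟩
  rw [ContinuousAt, Filter.tendsto_def]
  intro N hN
  obtain ⟨S₀, hS₀, hball⟩ := UniformSpace.mem_nhds_iff.1 hN
  obtain ⟨S₁, hS₁, hS₁c⟩ := comp_mem_uniformity_sets hS₀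
  obtain ⟨S₂', hS₂', hS₂c⟩ := comp_mem_uniformity_sets hS₁
  obtain ⟨S₂, ⟨hS₂, hS₂closed⟩, hS₂sub⟩ :=
    uniformity_hasBasis_closed.mem_iff.1 (inter_mem hS₂' hS₁)
  have htriple : ∀ A B' C' D : Completion (G ⧸ H), (A, B') ∈ S₂ → (B', C') ∈ S₂ →
      (C', D) ∈ S₂ → (A, D) ∈ S₀ := by
    intro A B' C' D h1 h2 h3
    exact hS₁c ⟨C', hS₂c ⟨B', (hS₂sub h1).1, (hS₂sub h2).1⟩, (hS₂sub h3).2⟩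
  -- pull back S₂ to an entourage of G ⧸ H
  set Wα : Set ((G ⧸ H) × (G ⧸ H)) :=
    (fun p : (G ⧸ H) × (G ⧸ H) =>
      ((p.1 : Completion (G ⧸ H)), (p.2 : Completion (G ⧸ H)))) ⁻¹' S₂ with hWαdef
  have hWα : Wα ∈ 𝓤 (G ⧸ H) := by
    rw [← Completion.comap_coe_eq_uniformity]
    exact preimage_mem_comap hS₂
  obtain ⟨V, hVo, hV1, hVs, hVsub⟩ := (hu Wα).1 hWα
  -- a small symmetric open neighbourhood with triple products in V
  obtain ⟨U₁, hU₁o, hU₁1, hU₁⟩ := exists_open_nhds_one_mul_subset (hVo.mem_nhds hV1)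
  obtain ⟨U₂, hU₂o, hU₂1, hU₂⟩ := exists_open_nhds_one_mul_subset (hU₁o.mem_nhds hU₁1)
  set U' : Set G := (U₁ ∩ U₂) ∩ (U₁ ∩ U₂)⁻¹ with hU'def
  have hU'o : IsOpen U' := ((hU₁o.inter hU₂o).inter (hU₁o.inter hU₂o).inv)
  have hU'1 : (1 : G) ∈ U' := ⟨⟨hU₁1, hU₂1⟩, by simpa using And.intro hU₁1 hU₂1⟩
  have hU's : ∀ h ∈ U', h⁻¹ ∈ U' := by
    rintro h ⟨h1, h2⟩
    exact ⟨by simpa using h2, by simpa using h1⟩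
  have hU'U₁ : U' ⊆ U₁ := fun h hh => hh.1.1
  have hU'U₂ : U' ⊆ U₂ := fun h hh => hh.1.2
  have htripleV : ∀ u v w : G, u ∈ U' → v ∈ U' → w ∈ U' → u * v * w ∈ V := by
    intro u v w hu' hv' hw'
    exact hU₁ (mul_mem_mul (hU₂ (mul_mem_mul (hU'U₂ hu') (hU'U₂ hv'))) (hU'U₁ hw'))
  -- the conjugated neighbourhood
  set Wc : Set G := (fun h : G => g₀ * h * g₀⁻¹) ⁻¹' U' with hWcdef
  have hWco : IsOpen Wc := hU'o.preimage (by fun_prop)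
  have hWc1 : (1 : G) ∈ Wc := by simpa [hWcdef] using hU'1
  have hWcs : ∀ h ∈ Wc, h⁻¹ ∈ Wc := by
    intro h hh
    have : (g₀ * h * g₀⁻¹)⁻¹ ∈ U' := hU's _ hh
    simpa [hWcdef, mul_inv_rev, mul_assoc] using this
  set N₁ : Set G := (fun g : G => g * g₀⁻¹) ⁻¹' U' with hN₁def
  have hN₁o : IsOpen N₁ := hU'o.preimage (by fun_prop)
  have hg₀N₁ : g₀ ∈ N₁ := by simpa [hN₁def] using hU'1
  set BWc : Set ((G ⧸ H) × (G ⧸ H)) :=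
    {p : (G ⧸ H) × (G ⧸ H) |
      ∃ x y : G, (x : G ⧸ H) = p.1 ∧ (y : G ⧸ H) = p.2 ∧ x * y⁻¹ ∈ Wc} with hBWcdef
  -- equicontinuity at the level of G ⧸ H
  have hequivα : ∀ g ∈ N₁, ∀ p ∈ BWc, ((g • p.1 : G ⧸ H), (g • p.2 : G ⧸ H)) ∈ Wα := by
    rintro g hg p ⟨x, y, hx, hy, hxy⟩
    refine hVsub ⟨g * x, g * y, by rw [← hx]; rfl, by rw [← hy]; rfl, ?_⟩
    have hid : (g * x) * (g * y)⁻¹ =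
        (g * g₀⁻¹) * (g₀ * (x * y⁻¹) * g₀⁻¹) * (g * g₀⁻¹)⁻¹ := by group
    rw [hid]
    exact htripleV _ _ _ hg hxy (hU's _ hg)
  have hBWc : BWc ∈ 𝓤 (G ⧸ H) := (hu _).2 ⟨Wc, hWco, hWc1, hWcs, subset_rfl⟩
  set E : Set (Completion (G ⧸ H) × Completion (G ⧸ H)) :=
    closure ((fun p : (G ⧸ H) × (G ⧸ H) =>
      ((p.1 : Completion (G ⧸ H)), (p.2 : Completion (G ⧸ H)))) '' BWc) with hEdef
  have hE : E ∈ 𝓤 (Completion (G ⧸ H)) := aux_closure_image_entourage hBWc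
  -- equicontinuity at the level of the completion
  have hequivC : ∀ g ∈ N₁, ∀ ξ η : Completion (G ⧸ H), (ξ, η) ∈ E → (a g ξ, a g η) ∈ S₂ := by
    intro g hg ξ η hξη
    have hcont : Continuous (fun p : Completion (G ⧸ H) × Completion (G ⧸ H) =>
        (a g p.1, a g p.2)) :=
      ((Completion.uniformContinuous_map.continuous.comp continuous_fst).prodMk
        (Completion.uniformContinuous_map.continuous.comp continuous_snd))
    have hK : IsClosed ((fun p : Completion (G ⧸ H) × Completion (G ⧸ H) =>
        (a g p.1, a g p.2)) ⁻¹' S₂) := hS₂closed.preimage hcont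
    have himg : (fun p : (G ⧸ H) × (G ⧸ H) =>
        ((p.1 : Completion (G ⧸ H)), (p.2 : Completion (G ⧸ H)))) '' BWc ⊆
        (fun p : Completion (G ⧸ H) × Completion (G ⧸ H) => (a g p.1, a g p.2)) ⁻¹' S₂ := by
      rintro _ ⟨p, hp, rfl⟩
      show (a g (p.1 : Completion (G ⧸ H)), a g (p.2 : Completion (G ⧸ H))) ∈ S₂
      rw [hacoe, hacoe]
      exact hequivα g hg p hp
    exact closure_minimal himg hK hξη
  -- symmetric entourage composing into E
  obtain ⟨T, hT, hTsymm, hTE⟩ := comp_symm_mem_uniformity_sets hE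
  -- pick a point of G ⧸ H close to ξ₀
  obtain ⟨q, hq⟩ := Completion.denseRange_coe.mem_nhds (UniformSpace.ball_mem_nhds ξ₀ hT)
  obtain ⟨x₀, rfl⟩ := QuotientGroup.mk_surjective q
  have hq' : (ξ₀, ((x₀ : G ⧸ H) : Completion (G ⧸ H))) ∈ T := hq
  set N₂ : Set G := (fun g : G => g₀ * g⁻¹) ⁻¹' V with hN₂def
  have hN₂o : IsOpen N₂ := hVo.preimage (by fun_prop)
  have hg₀N₂ : g₀ ∈ N₂ := by simpa [hN₂def] using hV1
  -- the final neighbourhood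
  refine mem_of_superset
    (prod_mem_nhds ((hN₁o.inter hN₂o).mem_nhds ⟨hg₀N₁, hg₀N₂⟩)
      (UniformSpace.ball_mem_nhds ξ₀ hT)) ?_
  rintro ⟨g, ξ⟩ ⟨⟨hgN₁, hgN₂⟩, hξ⟩
  apply hball
  have hc1 : (a g₀ ξ₀, a g₀ ((x₀ : G ⧸ H) : Completion (G ⧸ H))) ∈ S₂ :=
    hequivC g₀ hg₀N₁ _ _
      (hTE ⟨((x₀ : G ⧸ H) : Completion (G ⧸ H)), hq', refl_mem_uniformity hT⟩)
  have hc2 : (a g₀ ((x₀ : G ⧸ H) : Completion (G ⧸ H)),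
      a g ((x₀ : G ⧸ H) : Completion (G ⧸ H))) ∈ S₂ := by
    rw [hacoe, hacoe]
    have hid : (g₀ * x₀) * (g * x₀)⁻¹ = g₀ * g⁻¹ := by group
    have hmem : ((g₀ • (x₀ : G ⧸ H) : G ⧸ H), (g • (x₀ : G ⧸ H) : G ⧸ H)) ∈ Wα :=
      hVsub ⟨g₀ * x₀, g * x₀, rfl, rfl, by rw [hid]; exact hgN₂⟩
    exact hmem
  have hc3 : (a g ((x₀ : G ⧸ H) : Completion (G ⧸ H)), a g ξ) ∈ S₂ :=
    hequivC g hgN₁ _ _ (hTE ⟨ξ₀, hTsymm.symm _ _ hq', hξ⟩)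
  exact htriple _ _ _ _ hc1 hc2 hc3
end

section
/- Let K and L be compact zero-dimensional second-countable Hausdorff spaces, let m ≥ 1, let R^K ⊆ K^m and R^L ⊆ L^m be closed m-ary relations, and let f: L → K be a continuous surjection. Define F: Clop(K) → Clop(L) by F(X) = f⁻¹(X), and define the relation S^{Clop(K)} on Clop(K)^m by S^{Clop(K)}(X₁,…,X_m) iff there exist cᵢ ∈ Xᵢ (i = 1,…,m) with R^K(c₁,…,c_m), and similarly S^{Clop(L)} on Clop(L)^m using R^L. Then f satisfies the epimorphism condition for R — that is, for all x₁,…,x_m ∈ K: R^K(x₁,…,x_m) holds iff there exist y₁,…,y_m ∈ L with f(yᵢ) = xᵢ for each i and R^L(y₁,…,y_m) — if and only if F is S-preserving, that is, for all X₁,…,X_m ∈ Clop(K): S^{Clop(K)}(X₁,…,X_m) holds iff S^{Clop(L)}(F(X₁),…,F(X_m)). -/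
/-- Auxiliary compactness lemma: if for every family of clopen neighborhoods of the points
`x i` there is `c ∈ T` with `g i c` in the neighborhoods, then there is `c ∈ T` with
`g i c = x i` for all `i`. -/
lemma aux_limit {K Z : Type*} [TopologicalSpace K] [CompactSpace K] [T2Space K]
    [TotallyDisconnectedSpace K] [TopologicalSpace Z] [CompactSpace Z]
    {m : ℕ} (T : Set Z) (hT : IsClosed T) (g : Fin m → Z → K) (hg : ∀ i, Continuous (g i))
    (x : Fin m → K)
    (H : ∀ X : Fin m → Set K, (∀ i, IsClopen (X i)) → (∀ i, x i ∈ X i) →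
      ∃ c ∈ T, ∀ i, g i c ∈ X i) :
    ∃ c ∈ T, ∀ i, g i c = x i := by
  haveI : TotallySeparatedSpace K := loc_compact_t2_tot_disc_iff_tot_sep.mp inferInstance
  -- index type: families of clopen neighborhoods of x
  let ι := {X : Fin m → Set K // (∀ i, IsClopen (X i)) ∧ ∀ i, x i ∈ X i}
  haveI : Nonempty ι := ⟨⟨fun _ => Set.univ, fun _ => isClopen_univ, fun _ => Set.mem_univ _⟩⟩
  let t : ι → Set Z := fun X => T ∩ ⋂ i, (g i) ⁻¹' (X.1 i)
  have htcl : ∀ X : ι, IsClosed (t X) := fun X =>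
    hT.inter (isClosed_iInter fun i => (X.2.1 i).isClosed.preimage (hg i))
  have htn : ∀ X : ι, (t X).Nonempty := by
    intro X
    obtain ⟨c, hcT, hc⟩ := H X.1 X.2.1 X.2.2
    exact ⟨c, hcT, Set.mem_iInter.2 hc⟩
  have htd' : Directed (· ⊇ ·) t := by
    intro X Y
    refine ⟨⟨fun i => X.1 i ∩ Y.1 i, fun i => (X.2.1 i).inter (Y.2.1 i),
      fun i => ⟨X.2.2 i, Y.2.2 i⟩⟩,
      fun z hz => ⟨hz.1, Set.mem_iInter.2 fun i => (Set.mem_iInter.1 hz.2 i).1⟩,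
      fun z hz => ⟨hz.1, Set.mem_iInter.2 fun i => (Set.mem_iInter.1 hz.2 i).2⟩⟩
  obtain ⟨c, hc⟩ := IsCompact.nonempty_iInter_of_directed_nonempty_isCompact_isClosed t htd'
    htn (fun X => (htcl X).isCompact) htcl
  rw [Set.mem_iInter] at hc
  refine ⟨c, (hc (Classical.arbitrary ι)).1, fun i => ?_⟩
  by_contra hne
  obtain ⟨U, hU, hxU, hgU⟩ := exists_isClopen_of_totally_separated (Ne.symm hne)
  have := hc ⟨fun j => if j = i then U else Set.univ,
    fun j => by by_cases h : j = i <;> simp [h, hU, isClopen_univ],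
    fun j => by by_cases h : j = i <;> simp [h, hxU]⟩
  have := Set.mem_iInter.1 this.2 i
  simp at this
  exact hgU this

/-- For compact zero-dimensional second-countable Hausdorff spaces `K, L`
with closed `m`-ary relations `R^K, R^L` and a continuous surjection `f : L → K`,
`f` satisfies the epimorphism condition for the relations iff the dual map
`F = f⁻¹ : Clop(K) → Clop(L)` preserves the induced relations `S` on clopen sets. -/
theorem stmt_4 {K L : Type*} [TopologicalSpace K] [TopologicalSpace L]
    [CompactSpace K] [CompactSpace L] [T2Space K] [T2Space L]
    [TotallyDisconnectedSpace K] [TotallyDisconnectedSpace L]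
    [SecondCountableTopology K] [SecondCountableTopology L]
    {m : ℕ} (hm : 1 ≤ m)
    (RK : Set (Fin m → K)) (hRK : IsClosed RK)
    (RL : Set (Fin m → L)) (hRL : IsClosed RL)
    (f : L → K) (hf : Continuous f) (hsurj : Function.Surjective f) :
    ((∀ x : Fin m → K, x ∈ RK ↔
        ∃ y : Fin m → L, (∀ i, f (y i) = x i) ∧ y ∈ RL) ↔
      (∀ X : Fin m → Set K, (∀ i, IsClopen (X i)) →
        ((∃ c : Fin m → K, (∀ i, c i ∈ X i) ∧ c ∈ RK) ↔
          (∃ c : Fin m → L, (∀ i, c i ∈ f ⁻¹' (X i)) ∧ c ∈ RL)))) := by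
  constructor
  · intro hepi X hX
    constructor
    · rintro ⟨c, hcX, hcR⟩
      obtain ⟨y, hy, hyR⟩ := (hepi c).1 hcR
      exact ⟨y, fun i => by simpa [hy i] using hcX i, hyR⟩
    · rintro ⟨c, hcX, hcR⟩
      exact ⟨fun i => f (c i), hcX, (hepi _).2 ⟨c, fun i => rfl, hcR⟩⟩
  · intro hS x
    constructor
    · intro hx
      obtain ⟨c, hcT, hc⟩ := aux_limit RL hRL (fun i y => f (y i))
        (fun i => hf.comp (continuous_apply i)) x (fun X hX hxX => by
          obtain ⟨c, hcX, hcR⟩ := (hS X hX).1 ⟨x, hxX, hx⟩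
          exact ⟨c, hcR, hcX⟩)
      exact ⟨c, hc, hcT⟩
    · rintro ⟨y, hy, hyR⟩
      obtain ⟨c, hcT, hc⟩ := aux_limit RK hRK (fun i c => c i)
        (fun i => continuous_apply i) x (fun X hX hxX => by
          obtain ⟨c, hcX, hcR⟩ := (hS X hX).2 ⟨y, fun i => by simp [hy i]; exact hxX i, hyR⟩
          exact ⟨c, hcR, hcX⟩)
      have : c = x := funext hc
      rwa [this] at hcT
end

section
/- The class F_c of finite fans equipped with downwards closed maximal chains, with chain-preserving epimorphisms, has the joint projection property and the amalgamation property: (JPP) for any (A,𝒞^A), (B,𝒞^B) ∈ F_c there exist (C,𝒞^C) ∈ F_c and epimorphisms in F_c from (C,𝒞^C) onto each of them; (AP) for any (A,𝒞^A), (B₁,𝒞^{B₁}), (B₂,𝒞^{B₂}) ∈ F_c and epimorphisms φ₁: (B₁,𝒞^{B₁}) → (A,𝒞^A) and φ₂: (B₂,𝒞^{B₂}) → (A,𝒞^A) in F_c, there exist (C,𝒞^C) ∈ F_c and epimorphisms ψ₁: (C,𝒞^C) → (B₁,𝒞^{B₁}) and ψ₂: (C,𝒞^C) → (B₂,𝒞^{B₂})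 in F_c such that φ₁ ∘ ψ₁ = φ₂ ∘ ψ₂. -/
-- ============ auxiliary development ============

attribute [instance] FiniteFan.ord

namespace FanAux
open Set

lemma fin_exists_maximal_wrt {α β : Type*} [PartialOrder β] (f : α → β) (s : Set α)
    (h : s.Finite) (hs : s.Nonempty) : ∃ a ∈ s, ∀ a' ∈ s, f a ≤ f a' → f a = f a' := by
  obtain ⟨a, ha, hmax⟩ := Set.Finite.exists_maximalFor f s h hs
  exact ⟨a, ha, fun a' ha' hle => le_antisymm hle (hmax ha' hle)⟩

lemma fin_exists_minimal_wrt {α β : Type*} [PartialOrder β] (f : α → β) (s : Set α)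
    (h : s.Finite) (hs : s.Nonempty) : ∃ a ∈ s, ∀ a' ∈ s, f a' ≤ f a → f a = f a' := by
  obtain ⟨a, ha, hmin⟩ := Set.Finite.exists_minimalFor f s h hs
  exact ⟨a, ha, fun a' ha' hle => le_antisymm (hmin ha' hle) hle⟩

variable {A B : FiniteFan}

lemma ordle_iff {x y : A.carrier} : A.ord.le x y ↔ x ≤ y := Iff.rfl
lemma ordlt_iff {x y : A.carrier} : A.ord.lt x y ↔ x < y := Iff.rfl

lemma root_le' (a : A.carrier) : A.root ≤ a := A.root_le a

lemma exists_parent {b : A.carrier} (hb : b ≠ A.root) :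
    ∃ p, A.covby p b ∧ ∀ c : A.carrier, c < b → c ≤ p := by
  have hroot : A.root < b := lt_of_le_of_ne (A.root_le b) (Ne.symm hb)
  have hfin : (Set.Iio b).Finite := Set.toFinite _
  obtain ⟨p, hp, hpmax⟩ := fin_exists_maximal_wrt id _ hfin ⟨A.root, hroot⟩
  refine ⟨p, ⟨hp, ?_⟩, ?_⟩
  · intro z hpz hzb
    have h2 := hpmax z hzb (le_of_lt hpz)
    simp only [id] at h2
    exact absurd h2 (ne_of_lt hpz)
  · intro c hc
    rcases A.down_chain b c p (le_of_lt hc) (le_of_lt hp) with h | h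
    · exact h
    · have h2 := hpmax c hc h
      simp only [id] at h2
      exact le_of_eq h2.symm

lemma parent_unique {p q b : A.carrier} (hp : A.covby p b) (hq : A.covby q b) : p = q := by
  rcases A.down_chain b p q (le_of_lt hp.1) (le_of_lt hq.1) with h | h
  · rcases eq_or_lt_of_le h with h1 | h1
    · exact h1
    · exact absurd hq.1 (hp.2 q h1)
  · rcases eq_or_lt_of_le h with h1 | h1
    · exact h1.symm
    · exact absurd hp.1 (hq.2 p h1)

end FanAux

namespace FanAux
open Set

variable {A B : FiniteFan}

lemma DC.empty : A.DownClosed ∅ := fun _ _ _ h => h.elim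
lemma DC.univ : A.DownClosed Set.univ := fun _ _ _ _ => trivial
lemma DC.rootsingle : A.DownClosed {A.root} := by
  intro xx y hxy hy
  simp only [Set.mem_singleton_iff] at *
  subst hy
  exact le_antisymm hxy (A.root_le xx)

lemma DC.root_mem {C : Set A.carrier} (hC : A.DownClosed C) (hne : C.Nonempty) :
    A.root ∈ C := by
  obtain ⟨c, hc⟩ := hne
  exact hC A.root c (A.root_le c) hc

variable {𝒞 : Set (Set A.carrier)}

lemma DCMaxChain.empty_mem (h : DCMaxChain A 𝒞) : ∅ ∈ 𝒞 :=
  h.2.2 ∅ DC.empty (h.2.1.insert (fun C _ _ => Or.inl (Set.empty_subset C)))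

lemma DCMaxChain.univ_mem (h : DCMaxChain A 𝒞) : Set.univ ∈ 𝒞 :=
  h.2.2 _ DC.univ (h.2.1.insert (fun C _ _ => Or.inr (Set.subset_univ C)))

lemma DCMaxChain.rootsingle_mem (h : DCMaxChain A 𝒞) : {A.root} ∈ 𝒞 := by
  refine h.2.2 _ DC.rootsingle (h.2.1.insert (fun C hC _ => ?_))
  rcases C.eq_empty_or_nonempty with h1 | h1
  · exact Or.inr (h1 ▸ Set.empty_subset _)
  · exact Or.inl (Set.singleton_subset_iff.2 (DC.root_mem (h.1 C hC) h1))

lemma FcEpi.root_eq {𝒞B : Set (Set B.carrier)} {𝒞A : Set (Set A.carrier)}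
    {φ : B.carrier → A.carrier} (hA : DCMaxChain A 𝒞A) (hB : DCMaxChain B 𝒞B)
    (hφ : FcEpi B A 𝒞B 𝒞A φ) : φ B.root = A.root := by
  have h1 : (Set.image φ) '' 𝒞B = 𝒞A := hφ.2
  have h2 : φ '' {B.root} ∈ 𝒞A := by
    rw [← h1]; exact Set.mem_image_of_mem _ (DCMaxChain.rootsingle_mem hB)
  rw [Set.image_singleton] at h2
  have h3 : A.root ∈ ({φ B.root} : Set A.carrier) :=
    hA.1 _ h2 A.root (φ B.root) (A.root_le _) rfl
  exact (Set.mem_singleton_iff.1 h3).symm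

/-- An enumeration of a fan compatible with a downwards closed maximal chain. -/
structure FanEnum (B : FiniteFan) (𝒞 : Set (Set B.carrier)) where
  m : ℕ
  D : ℕ → Set B.carrier
  x : ℕ → B.carrier
  m_pos : 0 < m
  m_eq : m = Fintype.card B.carrier
  D0 : D 0 = ∅
  Dtop : ∀ k, m ≤ k → D k = Set.univ
  card : ∀ k, k ≤ m → (D k).ncard = k
  step : ∀ k, k < m → x (k+1) ∉ D k ∧ D (k+1) = insert (x (k+1)) (D k)
  mem : ∀ k, D k ∈ 𝒞
  rangeD : 𝒞 = Set.range D

theorem exists_fanEnum (h : DCMaxChain A 𝒞) : Nonempty (FanEnum A 𝒞) := by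
  classical
  set m := Fintype.card A.carrier with hm
  have hmpos : 0 < m := Fintype.card_pos_iff.2 ⟨A.root⟩
  have h𝒞fin : 𝒞.Finite := Set.toFinite _
  -- existence of a member of each cardinality
  have Hk : ∀ k, k ≤ m → ∃ C, C ∈ 𝒞 ∧ C.ncard = k := by
    intro k hk
    by_contra hno
    push_neg at hno
    set 𝒮 : Set (Set A.carrier) := {C | C ∈ 𝒞 ∧ C.ncard ≤ k} with h𝒮
    have h𝒮ne : 𝒮.Nonempty := ⟨∅, DCMaxChain.empty_mem h, by simp⟩
    obtain ⟨S, hS, hSmax⟩ := fin_exists_maximal_wrt id 𝒮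
      (h𝒞fin.subset (fun C hC => hC.1)) h𝒮ne
    simp only [id] at hSmax
    set 𝒯 : Set (Set A.carrier) := {C | C ∈ 𝒞 ∧ k ≤ C.ncard} with h𝒯
    have h𝒯ne : 𝒯.Nonempty := ⟨Set.univ, DCMaxChain.univ_mem h, by
      rw [Set.ncard_univ, Nat.card_eq_fintype_card]; exact hk⟩
    obtain ⟨T, hT, hTmin⟩ := fin_exists_minimal_wrt id 𝒯
      (h𝒞fin.subset (fun C hC => hC.1)) h𝒯ne
    simp only [id] at hTmin
    have hSk : S.ncard < k := lt_of_le_of_ne hS.2 (hno S hS.1)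
    have hTk : k < T.ncard := lt_of_le_of_ne hT.2 (fun e => hno T hT.1 e.symm)
    -- S ⊆ T
    have hsub : ∀ C1 C2, C1 ∈ 𝒞 → C2 ∈ 𝒞 → C1.ncard < C2.ncard → C1 ⊆ C2 := by
      intro C1 C2 h1 h2 hlt
      rcases eq_or_ne C1 C2 with he | he
      · exact he ▸ subset_rfl
      rcases h.2.1 h1 h2 he with hh | hh
      · exact hh
      · exact absurd (Set.ncard_le_ncard hh (Set.toFinite _)) (not_le.2 hlt)
    have hST : S ⊆ T := hsub S T hS.1 hT.1 (lt_trans hSk hTk)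
    have hTS : (T \ S).Nonempty := by
      rw [Set.diff_nonempty]
      intro hsub'
      exact absurd (Set.ncard_le_ncard hsub' (Set.toFinite _))
        (not_le.2 (lt_trans hSk hTk))
    obtain ⟨z, hz, hzmin⟩ := fin_exists_minimal_wrt id (T \ S) (Set.toFinite _) hTS
    simp only [id] at hzmin
    set Dn : Set A.carrier := insert z S with hDn
    have hDnDC : A.DownClosed Dn := by
      intro a b hab hb
      rcases hb with hb | hb
      · by_cases haS : a ∈ S
        · exact Or.inr haS
        · have haT : a ∈ T := h.1 T hT.1 a b hab (hb ▸ hz.1)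
          exact Or.inl (hzmin a ⟨haT, haS⟩ (hb ▸ hab)).symm
      · exact Or.inr (h.1 S hS.1 a b hab hb)
    have hcomp : ∀ C ∈ 𝒞, Dn ⊆ C ∨ C ⊆ Dn := by
      intro C hC
      rcases le_or_gt C.ncard k with hle | hlt
      · right
        rcases eq_or_ne S C with he | he
        · exact he ▸ Set.subset_insert _ _
        rcases h.2.1 hS.1 hC he with hh | hh
        · exact (hSmax C ⟨hC, hle⟩ hh) ▸ Set.subset_insert _ _
        · exact hh.trans (Set.subset_insert _ _)
      · left
        have hTC : T ⊆ C := by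
          rcases eq_or_ne C T with he | he
          · exact he ▸ subset_rfl
          rcases h.2.1 hC hT.1 he with hh | hh
          · exact (hTmin C ⟨hC, le_of_lt hlt⟩ hh) ▸ subset_rfl
          · exact hh
        exact (Set.insert_subset hz.1 hST).trans hTC
    have hDn𝒞 : Dn ∈ 𝒞 := h.2.2 Dn hDnDC (h.2.1.insert (fun C hC _ => hcomp C hC))
    have hzS : z ∉ S := hz.2
    have hcard : Dn.ncard = S.ncard + 1 := Set.ncard_insert_of_notMem hzS (Set.toFinite _)
    have : S = Dn := hSmax Dn ⟨hDn𝒞, by omega⟩ (Set.subset_insert _ _)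
    exact hzS (this ▸ Set.mem_insert z S)
  have Huniq : ∀ C1 C2, C1 ∈ 𝒞 → C2 ∈ 𝒞 → C1.ncard = C2.ncard → C1 = C2 := by
    intro C1 C2 h1 h2 hcc
    rcases eq_or_ne C1 C2 with he | he
    · exact he
    rcases h.2.1 h1 h2 he with hh | hh
    · exact Set.eq_of_subset_of_ncard_le hh hcc.ge (Set.toFinite _)
    · exact (Set.eq_of_subset_of_ncard_le hh hcc.le (Set.toFinite _)).symm
  set D : ℕ → Set A.carrier := fun k => if hk : k ≤ m then (Hk k hk).choose else Set.univ
    with hD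
  have hDmem : ∀ k, k ≤ m → D k ∈ 𝒞 ∧ (D k).ncard = k := by
    intro k hk
    simp only [hD, dif_pos hk]
    exact (Hk k hk).choose_spec
  have hDge : ∀ k, m ≤ k → D k = Set.univ := by
    intro k hk
    rcases eq_or_lt_of_le hk with he | hlt
    · have := hDmem k (le_of_eq he.symm)
      refine Huniq _ _ this.1 (DCMaxChain.univ_mem h) ?_
      rw [this.2, Set.ncard_univ, Nat.card_eq_fintype_card, ← he]
    · simp only [hD, dif_neg (not_le.2 hlt)]
  have hDstep : ∀ k, k < m → ∃ z ∉ D k, D (k+1) = insert z (D k) := by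
    intro k hk
    have h1 := hDmem k (le_of_lt hk)
    have h2 := hDmem (k+1) hk
    have hss : D k ⊆ D (k+1) := by
      rcases eq_or_ne (D k) (D (k+1)) with he | he
      · exact he ▸ subset_rfl
      rcases h.2.1 h1.1 h2.1 he with hh | hh
      · exact hh
      · exfalso
        have := Set.ncard_le_ncard hh (Set.toFinite _)
        omega
    have hne : (D (k+1) \ D k).Nonempty := by
      rw [Set.diff_nonempty]
      intro hsub'
      have := Set.ncard_le_ncard hsub' (Set.toFinite _)
      omega
    obtain ⟨z, hz⟩ := hne
    refine ⟨z, hz.2, ?_⟩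
    refine (Set.eq_of_subset_of_ncard_le (Set.insert_subset hz.1 hss) ?_ (Set.toFinite _)).symm
    rw [Set.ncard_insert_of_notMem hz.2 (Set.toFinite _)]
    omega
  set x : ℕ → A.carrier := fun k =>
    if hk : 1 ≤ k ∧ k ≤ m then (hDstep (k-1) (by omega)).choose else A.root with hx
  refine ⟨⟨m, D, x, hmpos, hm, ?_, hDge, fun k hk => (hDmem k hk).2, ?_, ?_, ?_⟩⟩
  · have := hDmem 0 (Nat.zero_le m)
    rw [← Set.ncard_eq_zero (Set.toFinite _)]
    exact this.2
  · intro k hk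
    have hk1 : 1 ≤ k + 1 ∧ k + 1 ≤ m := ⟨le_refl _ |>.trans (by omega), hk⟩
    have := (hDstep ((k+1)-1) (by omega : (k+1)-1 < m)).choose_spec
    simp only [hx, dif_pos hk1]
    simpa using this
  · intro k
    rcases le_or_gt k m with hk | hk
    · exact (hDmem k hk).1
    · rw [hDge k (le_of_lt hk)]
      exact DCMaxChain.univ_mem h
  · ext C
    constructor
    · intro hC
      have hcard : C.ncard ≤ m := by
        have := Set.ncard_le_ncard (Set.subset_univ C) (Set.toFinite _)
        rwa [Set.ncard_univ, Nat.card_eq_fintype_card, ← hm] at this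
      exact ⟨C.ncard, (Huniq _ _ ((hDmem _ hcard).1) hC ((hDmem _ hcard).2)) ⟩
    · rintro ⟨k, rfl⟩
      rcases le_or_gt k m with hk | hk
      · exact (hDmem k hk).1
      · rw [hDge k (le_of_lt hk)]
        exact DCMaxChain.univ_mem h

end FanAux

namespace FanAux
open Set

variable {A B B₁ B₂ : FiniteFan} {𝒞 : Set (Set A.carrier)}

lemma FanEnum.mono (E : FanEnum A 𝒞) : ∀ k l, k ≤ l → E.D k ⊆ E.D l := by
  have hstep : ∀ k, E.D k ⊆ E.D (k+1) := by
    intro k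
    rcases lt_or_ge k E.m with hk | hk
    · rw [(E.step k hk).2]; exact Set.subset_insert _ _
    · rw [E.Dtop k hk, E.Dtop (k+1) (by omega)]
  intro k l hkl
  induction l with
  | zero => simp_all
  | succ n ih =>
    rcases Nat.lt_or_ge k (n+1) with h1 | h1
    · exact (ih (by omega)).trans (hstep n)
    · have : k = n + 1 := by omega
      exact this ▸ subset_rfl

lemma FanEnum.DC (h : DCMaxChain A 𝒞) (E : FanEnum A 𝒞) (k : ℕ) :
    A.DownClosed (E.D k) := h.1 _ (E.mem k)

lemma FanEnum.x1_root (h : DCMaxChain A 𝒞) (E : FanEnum A 𝒞) : E.x 1 = A.root := by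
  have h1 := (E.step 0 E.m_pos).2
  rw [E.D0] at h1
  have hroot : A.root ∈ E.D 1 := by
    refine DC.root_mem (E.DC h 1) ?_
    rw [h1]; exact ⟨E.x 1, Set.mem_insert _ _⟩
  rw [h1] at hroot
  have h2 : A.root = E.x 1 := by simpa using hroot
  exact h2.symm

lemma FanEnum.D1_root (h : DCMaxChain A 𝒞) (E : FanEnum A 𝒞) : E.D 1 = {A.root} := by
  have h1 := (E.step 0 E.m_pos).2
  rw [E.D0] at h1
  rw [h1, E.x1_root h]
  simp

lemma FanEnum.xmem (E : FanEnum A 𝒞) {k : ℕ} (hk : k < E.m) : E.x (k+1) ∈ E.D (k+1) := by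
  rw [(E.step k hk).2]; exact Set.mem_insert _ _

lemma FanEnum.le_x_mem (h : DCMaxChain A 𝒞) (E : FanEnum A 𝒞) {k : ℕ} (hk : k < E.m)
    {z : A.carrier} (hz : z ≤ E.x (k+1)) : z ∈ E.D (k+1) :=
  E.DC h (k+1) z _ hz (E.xmem hk)

lemma FanEnum.lt_x_mem (h : DCMaxChain A 𝒞) (E : FanEnum A 𝒞) {k : ℕ} (hk : k < E.m)
    {z : A.carrier} (hz : z ≤ E.x (k+1)) (hne : z ≠ E.x (k+1)) : z ∈ E.D k := by
  have := E.le_x_mem h hk hz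
  rw [(E.step k hk).2] at this
  rcases this with h1 | h1
  · exact absurd h1 hne
  · exact h1

/-- The two-coordinate step relation. -/
def Rstep (B₁ B₂ : FiniteFan) (p q : B₁.carrier × B₂.carrier) : Prop :=
  B₁.R p.1 q.1 ∧ B₂.R p.2 q.2

/-- The synchronized-path lemma. -/
theorem Mlemma {φ₁ : B₁.carrier → A.carrier} {φ₂ : B₂.carrier → A.carrier}
    (hR1 : ∀ s t, B₁.R s t → A.R (φ₁ s) (φ₁ t))
    (hR2 : ∀ s t, B₂.R s t → A.R (φ₂ s) (φ₂ t))
    (hr1 : φ₁ B₁.root = A.root) (hr2 : φ₂ B₂.root = A.root) :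
    ∀ (b₁ : B₁.carrier) (b₂ : B₂.carrier), φ₁ b₁ = φ₂ b₂ →
    ∃ L : List (B₁.carrier × B₂.carrier), L ≠ [] ∧
      L.head? = some (B₁.root, B₂.root) ∧ L.getLast? = some (b₁, b₂) ∧
      List.Chain' (Rstep B₁ B₂) L ∧
      ∀ p ∈ L, φ₁ p.1 = φ₂ p.2 ∧ p.1 ≤ b₁ ∧ p.2 ≤ b₂ := by
  classical
  set μ : B₁.carrier → B₂.carrier → ℕ :=
    fun b₁ b₂ => (Set.Iic b₁).ncard + (Set.Iic b₂).ncard with hμ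
  have hparent_lt : ∀ {b p : B₁.carrier}, p < b → (Set.Iic p).ncard < (Set.Iic b).ncard := by
    intro b p hp
    refine Set.ncard_lt_ncard ?_ (Set.toFinite _)
    constructor
    · exact fun z hz => le_trans hz (le_of_lt hp)
    · intro hsub
      exact absurd (hsub (le_refl b)) (not_le_of_gt hp)
  have hparent_lt2 : ∀ {b p : B₂.carrier}, p < b → (Set.Iic p).ncard < (Set.Iic b).ncard := by
    intro b p hp
    refine Set.ncard_lt_ncard ?_ (Set.toFinite _)
    constructor
    · exact fun z hz => le_trans hz (le_of_lt hp)
    · intro hsub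
      exact absurd (hsub (le_refl b)) (not_le_of_gt hp)
  suffices H : ∀ N b₁ b₂, μ b₁ b₂ ≤ N → φ₁ b₁ = φ₂ b₂ →
      ∃ L : List (B₁.carrier × B₂.carrier), L ≠ [] ∧
      L.head? = some (B₁.root, B₂.root) ∧ L.getLast? = some (b₁, b₂) ∧
      List.Chain' (Rstep B₁ B₂) L ∧
      ∀ p ∈ L, φ₁ p.1 = φ₂ p.2 ∧ p.1 ≤ b₁ ∧ p.2 ≤ b₂ by
    intro b₁ b₂ hb
    exact H (μ b₁ b₂) b₁ b₂ (le_refl _) hb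
  intro N
  induction N with
  | zero =>
    intro b₁ b₂ hN _
    exfalso
    have h1 : 0 < (Set.Iic b₁).ncard := (Set.ncard_pos (Set.toFinite _)).2 ⟨b₁, le_refl _⟩
    simp only [hμ] at hN
    omega
  | succ N ih =>
    intro b₁ b₂ hN hb
    -- helper to extend a list by one pair
    have ext1 : ∀ (c₁ : B₁.carrier) (c₂ : B₂.carrier)
        (hc : φ₁ c₁ = φ₂ c₂) (hle1 : c₁ ≤ b₁) (hle2 : c₂ ≤ b₂)
        (hs1 : B₁.R c₁ b₁) (hs2 : B₂.R c₂ b₂),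
        (∃ L : List (B₁.carrier × B₂.carrier), L ≠ [] ∧
          L.head? = some (B₁.root, B₂.root) ∧ L.getLast? = some (c₁, c₂) ∧
          List.Chain' (Rstep B₁ B₂) L ∧
          ∀ p ∈ L, φ₁ p.1 = φ₂ p.2 ∧ p.1 ≤ c₁ ∧ p.2 ≤ c₂) →
        ∃ L : List (B₁.carrier × B₂.carrier), L ≠ [] ∧
          L.head? = some (B₁.root, B₂.root) ∧ L.getLast? = some (b₁, b₂) ∧
          List.Chain' (Rstep B₁ B₂) L ∧
          ∀ p ∈ L, φ₁ p.1 = φ₂ p.2 ∧ p.1 ≤ b₁ ∧ p.2 ≤ b₂ := by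
      rintro c₁ c₂ hc hle1 hle2 hs1 hs2 ⟨L, hne, hhd, hlst, hch, hall⟩
      refine ⟨L ++ [(b₁, b₂)], by simp, ?_, ?_, ?_, ?_⟩
      · rcases L with _ | ⟨a, L'⟩
        · exact absurd rfl hne
        · simpa using hhd
      · simp
      · refine List.IsChain.append hch (List.isChain_singleton _) ?_
        intro x hx y hy
        simp only [List.head?_cons, Option.mem_def, Option.some.injEq] at hy
        rw [hlst] at hx
        simp only [Option.mem_def, Option.some.injEq] at hx
        subst hx; subst hy
        exact ⟨hs1, hs2⟩
      · intro p hp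
        rcases List.mem_append.1 hp with h1 | h1
        · obtain ⟨ha, hb1, hb2⟩ := hall p h1
          exact ⟨ha, hb1.trans hle1, hb2.trans hle2⟩
        · simp only [List.mem_singleton] at h1
          subst h1
          exact ⟨hb, le_refl _, le_refl _⟩
    by_cases h1 : b₁ = B₁.root
    · by_cases h2 : b₂ = B₂.root
      · subst h1; subst h2
        exact ⟨[(B₁.root, B₂.root)], by simp, by simp, by simp,
          List.isChain_singleton _, by simp [hr1, hr2]⟩
      · obtain ⟨q, hq, _⟩ := exists_parent h2
        rcases hR2 q b₂ (Or.inr hq) with he | hcov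
        · refine ext1 b₁ q (hb.trans he.symm) (le_refl _)
            (le_of_lt hq.1) (Or.inl rfl) (Or.inr hq) ?_
          exact ih b₁ q (by
            have := hparent_lt2 hq.1
            simp only [hμ] at hN ⊢
            omega) (hb.trans he.symm)
        · exfalso
          have : φ₂ b₂ = A.root := by rw [← hb, h1, hr1]
          rw [this] at hcov
          exact absurd (A.root_le (φ₂ q)) (not_le_of_gt hcov.1)
    · obtain ⟨p, hp, _⟩ := exists_parent h1
      rcases hR1 p b₁ (Or.inr hp) with he | hcov
      · refine ext1 p b₂ (he.trans hb) (le_of_lt hp.1) (le_refl _) (Or.inr hp) (Or.inl rfl) ?_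
        exact ih p b₂ (by
          have := hparent_lt hp.1
          simp only [hμ] at hN ⊢
          omega) (he.trans hb)
      · by_cases h2 : b₂ = B₂.root
        · exfalso
          have : φ₁ b₁ = A.root := by rw [hb, h2, hr2]
          rw [this] at hcov
          exact absurd (A.root_le (φ₁ p)) (not_le_of_gt hcov.1)
        · obtain ⟨q, hq, _⟩ := exists_parent h2
          rcases hR2 q b₂ (Or.inr hq) with he | hcov2
          · refine ext1 b₁ q (hb.trans he.symm) (le_refl _) (le_of_lt hq.1)
              (Or.inl rfl) (Or.inr hq) ?_
            exact ih b₁ q (by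
              have := hparent_lt2 hq.1
              simp only [hμ] at hN ⊢
              omega) (hb.trans he.symm)
          · have hpq : φ₁ p = φ₂ q := by
              rw [hb] at hcov
              exact parent_unique hcov hcov2
            refine ext1 p q hpq (le_of_lt hp.1) (le_of_lt hq.1) (Or.inr hp) (Or.inr hq) ?_
            exact ih p q (by
              have l1 := hparent_lt hp.1
              have l2 := hparent_lt2 hq.1
              simp only [hμ] at hN ⊢
              omega) hpq

end FanAux

namespace FanAux
open Set

variable {A B₁ B₂ : FiniteFan}

/-- first/second coordinates of a list of pairs, as a set -/
def c1 (q : List (B₁.carrier × B₂.carrier)) : Set B₁.carrier := {b | ∃ p ∈ q, p.1 = b}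
def c2 (q : List (B₁.carrier × B₂.carrier)) : Set B₂.carrier := {b | ∃ p ∈ q, p.2 = b}

lemma mem_of_getLast?' {α} {l : List α} {a : α} (h : l.getLast? = some a) : a ∈ l := by
  rcases l.eq_nil_or_concat with rfl | ⟨l', b, rfl⟩
  · simp at h
  · rw [List.concat_eq_append, List.getLast?_concat] at h
    simp only [Option.some.injEq] at h
    simp [h]

/-- A certified block between chain states. -/
structure BlockOK (φ₁ : B₁.carrier → A.carrier) (φ₂ : B₂.carrier → A.carrier)
    (D : ℕ → Set B₁.carrier) (E : ℕ → Set B₂.carrier) (i i' j j' : ℕ)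
    (bl : List (B₁.carrier × B₂.carrier)) : Prop where
  ne : bl ≠ []
  hd : bl.head? = some (B₁.root, B₂.root)
  chain : List.Chain' (Rstep B₁ B₂) bl
  sync : ∀ p ∈ bl, φ₁ p.1 = φ₂ p.2
  pre1 : ∀ q, q <+: bl → ∃ k, i ≤ k ∧ k ≤ i' ∧ D i ∪ c1 q = D k
  pre2 : ∀ q, q <+: bl → ∃ k, j ≤ k ∧ k ≤ j' ∧ E j ∪ c2 q = E k
  tot1 : D i ∪ c1 bl = D i'
  tot2 : E j ∪ c2 bl = E j'
  mono1 : i ≤ i'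
  mono2 : j ≤ j'

variable {𝒞B₁ : Set (Set B₁.carrier)} {𝒞B₂ : Set (Set B₂.carrier)}

lemma mkBlock (hB₁ : DCMaxChain B₁ 𝒞B₁) (hB₂ : DCMaxChain B₂ 𝒞B₂)
    (E1 : FanEnum B₁ 𝒞B₁) (E2 : FanEnum B₂ 𝒞B₂)
    {φ₁ : B₁.carrier → A.carrier} {φ₂ : B₂.carrier → A.carrier}
    (hR1 : ∀ s t, B₁.R s t → A.R (φ₁ s) (φ₁ t))
    (hR2 : ∀ s t, B₂.R s t → A.R (φ₂ s) (φ₂ t))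
    (hr1 : φ₁ B₁.root = A.root) (hr2 : φ₂ B₂.root = A.root)
    {b₁ : B₁.carrier} {b₂ : B₂.carrier} {i i' j j' : ℕ} (hb : φ₁ b₁ = φ₂ b₂)
    (H1 : (i' = i ∧ b₁ ∈ E1.D i) ∨ (i < E1.m ∧ i' = i + 1 ∧ b₁ = E1.x (i+1)))
    (H2 : (j' = j ∧ b₂ ∈ E2.D j) ∨ (j < E2.m ∧ j' = j + 1 ∧ b₂ = E2.x (j+1))) :
    ∃ bl, BlockOK φ₁ φ₂ E1.D E2.D i i' j j' bl := by
  obtain ⟨L, hne, hhd, hlst, hch, hall⟩ := Mlemma hR1 hR2 hr1 hr2 b₁ b₂ hb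
  have hb1L : b₁ ∈ c1 L := ⟨(b₁, b₂), mem_of_getLast?' hlst, rfl⟩
  -- the key "state" computation for the first coordinate
  have key1 : ∀ q : List (B₁.carrier × B₂.carrier), (∀ p ∈ q, p ∈ L) →
      ∃ k, i ≤ k ∧ k ≤ i' ∧ E1.D i ∪ c1 q = E1.D k ∧ (b₁ ∈ c1 q → k = i') := by
    intro q hq
    have hsub : c1 q ⊆ {z | z ≤ b₁} := by
      rintro z ⟨p, hp, rfl⟩
      exact (hall p (hq p hp)).2.1
    rcases H1 with ⟨he, hmem⟩ | ⟨hm, he, hx⟩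
    · refine ⟨i, le_refl _, le_of_eq he.symm, ?_, fun _ => he.symm⟩
      rw [Set.union_eq_self_of_subset_right]
      intro z hz
      exact (E1.DC hB₁ i) z b₁ (hsub hz) hmem
    · by_cases hbq : b₁ ∈ c1 q
      · refine ⟨i + 1, by omega, le_of_eq he.symm, ?_, fun _ => he.symm⟩
        apply Set.Subset.antisymm
        · apply Set.union_subset (E1.mono i (i+1) (by omega))
          intro z hz
          exact E1.le_x_mem hB₁ hm (hx ▸ (hsub hz))
        · rw [(E1.step i hm).2, ← hx]
          intro z hz
          rcases hz with rfl | hz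
          · exact Or.inr hbq
          · exact Or.inl hz
      · refine ⟨i, le_refl _, by omega, ?_, fun h => absurd h hbq⟩
        rw [Set.union_eq_self_of_subset_right]
        intro z hz
        refine E1.lt_x_mem hB₁ hm (hx ▸ (hsub hz)) ?_
        intro hzz
        refine hbq ?_
        rw [hx.trans hzz.symm]
        exact hz
  have hb2L : b₂ ∈ c2 L := ⟨(b₁, b₂), mem_of_getLast?' hlst, rfl⟩
  have key2 : ∀ q : List (B₁.carrier × B₂.carrier), (∀ p ∈ q, p ∈ L) →
      ∃ k, j ≤ k ∧ k ≤ j' ∧ E2.D j ∪ c2 q = E2.D k ∧ (b₂ ∈ c2 q → k = j') := by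
    intro q hq
    have hsub : c2 q ⊆ {z | z ≤ b₂} := by
      rintro z ⟨p, hp, rfl⟩
      exact (hall p (hq p hp)).2.2
    rcases H2 with ⟨he, hmem⟩ | ⟨hm, he, hx⟩
    · refine ⟨j, le_refl _, le_of_eq he.symm, ?_, fun _ => he.symm⟩
      rw [Set.union_eq_self_of_subset_right]
      intro z hz
      exact (E2.DC hB₂ j) z b₂ (hsub hz) hmem
    · by_cases hbq : b₂ ∈ c2 q
      · refine ⟨j + 1, by omega, le_of_eq he.symm, ?_, fun _ => he.symm⟩
        apply Set.Subset.antisymm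
        · apply Set.union_subset (E2.mono j (j+1) (by omega))
          intro z hz
          exact E2.le_x_mem hB₂ hm (hx ▸ (hsub hz))
        · rw [(E2.step j hm).2, ← hx]
          intro z hz
          rcases hz with rfl | hz
          · exact Or.inr hbq
          · exact Or.inl hz
      · refine ⟨j, le_refl _, by omega, ?_, fun h => absurd h hbq⟩
        rw [Set.union_eq_self_of_subset_right]
        intro z hz
        refine E2.lt_x_mem hB₂ hm (hx ▸ (hsub hz)) ?_
        intro hzz
        refine hbq ?_
        rw [hx.trans hzz.symm]
        exact hz
  have hmono1 : i ≤ i' := by rcases H1 with ⟨he, _⟩ | ⟨_, he, _⟩ <;> omega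
  have hmono2 : j ≤ j' := by rcases H2 with ⟨he, _⟩ | ⟨_, he, _⟩ <;> omega
  refine ⟨L, hne, hhd, hch, fun p hp => (hall p hp).1, ?_, ?_, ?_, ?_, hmono1, hmono2⟩
  · intro q hq
    obtain ⟨k, h1, h2, h3, _⟩ := key1 q (fun p hp => hq.subset hp)
    exact ⟨k, h1, h2, h3⟩
  · intro q hq
    obtain ⟨k, h1, h2, h3, _⟩ := key2 q (fun p hp => hq.subset hp)
    exact ⟨k, h1, h2, h3⟩
  · obtain ⟨k, h1, h2, h3, h4⟩ := key1 L (fun p hp => hp)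
    rw [h3, h4 hb1L]
  · obtain ⟨k, h1, h2, h3, h4⟩ := key2 L (fun p hp => hp)
    rw [h3, h4 hb2L]

end FanAux

namespace FanAux
open Set

variable {A B₁ B₂ : FiniteFan}
variable {𝒞A : Set (Set A.carrier)} {𝒞B₁ : Set (Set B₁.carrier)} {𝒞B₂ : Set (Set B₂.carrier)}

theorem staircase (hA : DCMaxChain A 𝒞A) (hB₁ : DCMaxChain B₁ 𝒞B₁) (hB₂ : DCMaxChain B₂ 𝒞B₂)
    {φ₁ : B₁.carrier → A.carrier} {φ₂ : B₂.carrier → A.carrier}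
    (hφ₁ : FcEpi B₁ A 𝒞B₁ 𝒞A φ₁) (hφ₂ : FcEpi B₂ A 𝒞B₂ 𝒞A φ₂)
    (E1 : FanEnum B₁ 𝒞B₁) (E2 : FanEnum B₂ 𝒞B₂) :
    ∀ (N i j : ℕ), i ≤ E1.m → j ≤ E2.m → E1.m - i + (E2.m - j) ≤ N →
      φ₁ '' E1.D i = φ₂ '' E2.D j →
    ∃ (T : ℕ) (blk : ℕ → List (B₁.carrier × B₂.carrier)) (ii jj : ℕ → ℕ),
      ii 0 = i ∧ jj 0 = j ∧ ii T = E1.m ∧ jj T = E2.m ∧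
      ∀ t, t < T → BlockOK φ₁ φ₂ E1.D E2.D (ii t) (ii (t+1)) (jj t) (jj (t+1)) (blk t) := by
  have hr1 : φ₁ B₁.root = A.root := FcEpi.root_eq hA hB₁ hφ₁
  have hr2 : φ₂ B₂.root = A.root := FcEpi.root_eq hA hB₂ hφ₂
  have hR1 := hφ₁.1.2
  have hR2 := hφ₂.1.2
  have himg1 : ∀ k, φ₁ '' E1.D k ∈ 𝒞A := fun k => hφ₁.2 ▸ Set.mem_image_of_mem _ (E1.mem k)
  have himg2 : ∀ k, φ₂ '' E2.D k ∈ 𝒞A := fun k => hφ₂.2 ▸ Set.mem_image_of_mem _ (E2.mem k)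
  have hins1 : ∀ k, k < E1.m →
      φ₁ '' E1.D (k+1) = insert (φ₁ (E1.x (k+1))) (φ₁ '' E1.D k) := by
    intro k hk
    rw [(E1.step k hk).2, Set.image_insert_eq]
  have hins2 : ∀ k, k < E2.m →
      φ₂ '' E2.D (k+1) = insert (φ₂ (E2.x (k+1))) (φ₂ '' E2.D k) := by
    intro k hk
    rw [(E2.step k hk).2, Set.image_insert_eq]
  intro N
  induction N with
  | zero =>
    intro i j hi hj hN heq
    have hi' : i = E1.m := by omega
    have hj' : j = E2.m := by omega
    exact ⟨0, fun _ => [], fun _ => i, fun _ => j, rfl, rfl, hi', hj', fun t ht => by omega⟩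
  | succ N ih =>
    intro i j hi hj hN heq
    by_cases hend : i = E1.m ∧ j = E2.m
    · exact ⟨0, fun _ => [], fun _ => i, fun _ => j, rfl, rfl, hend.1, hend.2,
        fun t ht => by omega⟩
    -- helper to prepend a block
    have prepend : ∀ (i' j' : ℕ) (bl : List (B₁.carrier × B₂.carrier)),
        BlockOK φ₁ φ₂ E1.D E2.D i i' j j' bl →
        (∃ (T : ℕ) (blk : ℕ → List (B₁.carrier × B₂.carrier)) (ii jj : ℕ → ℕ),
          ii 0 = i' ∧ jj 0 = j' ∧ ii T = E1.m ∧ jj T = E2.m ∧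
          ∀ t, t < T → BlockOK φ₁ φ₂ E1.D E2.D (ii t) (ii (t+1)) (jj t) (jj (t+1)) (blk t)) →
        ∃ (T : ℕ) (blk : ℕ → List (B₁.carrier × B₂.carrier)) (ii jj : ℕ → ℕ),
          ii 0 = i ∧ jj 0 = j ∧ ii T = E1.m ∧ jj T = E2.m ∧
          ∀ t, t < T → BlockOK φ₁ φ₂ E1.D E2.D (ii t) (ii (t+1)) (jj t) (jj (t+1)) (blk t) := by
      rintro i' j' bl hbl ⟨T, blk, ii, jj, h0, h0', hT, hT', hblk⟩
      refine ⟨T + 1, fun t => match t with | 0 => bl | (t+1) => blk t,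
        fun t => match t with | 0 => i | (t+1) => ii t,
        fun t => match t with | 0 => j | (t+1) => jj t, rfl, rfl, hT, hT', ?_⟩
      intro t ht
      match t with
      | 0 => simpa [h0, h0'] using hbl
      | (t+1) => exact hblk t (by omega)
    by_cases hC1 : i < E1.m ∧ φ₁ '' E1.D (i+1) = φ₁ '' E1.D i
    · obtain ⟨hilt, hstut⟩ := hC1
      have hmem : φ₁ (E1.x (i+1)) ∈ φ₂ '' E2.D j := by
        rw [← heq, ← hstut, hins1 i hilt]
        exact Set.mem_insert _ _
      obtain ⟨v, hv, hveq⟩ := hmem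
      obtain ⟨bl, hbl⟩ := mkBlock hB₁ hB₂ E1 E2 hR1 hR2 hr1 hr2 hveq.symm
        (Or.inr ⟨hilt, rfl, rfl⟩) (Or.inl ⟨rfl, hv⟩)
      refine prepend (i+1) j bl hbl (ih (i+1) j hilt hj (by omega) ?_)
      rw [hstut, heq]
    · by_cases hC2 : j < E2.m ∧ φ₂ '' E2.D (j+1) = φ₂ '' E2.D j
      · obtain ⟨hjlt, hstut⟩ := hC2
        have hmem : φ₂ (E2.x (j+1)) ∈ φ₁ '' E1.D i := by
          rw [heq, ← hstut, hins2 j hjlt]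
          exact Set.mem_insert _ _
        obtain ⟨u, hu, hueq⟩ := hmem
        obtain ⟨bl, hbl⟩ := mkBlock hB₁ hB₂ E1 E2 hR1 hR2 hr1 hr2 hueq
          (Or.inl ⟨rfl, hu⟩) (Or.inr ⟨hjlt, rfl, rfl⟩)
        refine prepend i (j+1) bl hbl (ih i (j+1) hi hjlt (by omega) ?_)
        rw [hstut, heq]
      · -- both sides advance the image
        have hilt : i < E1.m := by
          rcases lt_or_ge i E1.m with h | h
          · exact h
          · exfalso
            have hieq : i = E1.m := le_antisymm hi h
            have huniv : φ₁ '' E1.D i = Set.univ := by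
              rw [hieq, E1.Dtop E1.m (le_refl _), Set.image_univ, Set.range_eq_univ]
              exact hφ₁.1.1
            have hjlt : j < E2.m := by
              rcases lt_or_ge j E2.m with h' | h'
              · exact h'
              · exact absurd ⟨hieq, le_antisymm hj h'⟩ hend
            refine hC2 ⟨hjlt, ?_⟩
            have h1 : φ₂ '' E2.D j = Set.univ := by rw [← heq, huniv]
            rw [h1]
            apply Set.eq_univ_of_univ_subset
            rw [← h1]
            exact Set.image_mono (E2.mono j (j+1) (by omega))
        have hjlt : j < E2.m := by
          rcases lt_or_ge j E2.m with h | h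
          · exact h
          · exfalso
            have hjeq : j = E2.m := le_antisymm hj h
            have huniv : φ₂ '' E2.D j = Set.univ := by
              rw [hjeq, E2.Dtop E2.m (le_refl _), Set.image_univ, Set.range_eq_univ]
              exact hφ₂.1.1
            refine hC1 ⟨by omega, ?_⟩
            have h1 : φ₁ '' E1.D i = Set.univ := by rw [heq, huniv]
            rw [h1]
            apply Set.eq_univ_of_univ_subset
            rw [← h1]
            exact Set.image_mono (E1.mono i (i+1) (by omega))
        have hane : φ₁ (E1.x (i+1)) ∉ φ₁ '' E1.D i := by
          intro hmem
          refine hC1 ⟨hilt, ?_⟩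
          rw [hins1 i hilt, Set.insert_eq_self.2 hmem]
        have hbne : φ₂ (E2.x (j+1)) ∉ φ₂ '' E2.D j := by
          intro hmem
          refine hC2 ⟨hjlt, ?_⟩
          rw [hins2 j hjlt, Set.insert_eq_self.2 hmem]
        have hab : φ₁ (E1.x (i+1)) = φ₂ (E2.x (j+1)) := by
          have hP := himg1 (i+1)
          have hQ := himg2 (j+1)
          rcases eq_or_ne (φ₁ '' E1.D (i+1)) (φ₂ '' E2.D (j+1)) with he | he
          · have : φ₁ (E1.x (i+1)) ∈ φ₂ '' E2.D (j+1) := by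
              rw [← he, hins1 i hilt]; exact Set.mem_insert _ _
            rw [hins2 j hjlt] at this
            rcases this with h' | h'
            · exact h'
            · rw [← heq] at h'
              exact absurd h' hane
          · rcases hA.2.1 hP hQ he with hss | hss
            · have : φ₁ (E1.x (i+1)) ∈ φ₂ '' E2.D (j+1) := by
                apply hss
                rw [hins1 i hilt]; exact Set.mem_insert _ _
              rw [hins2 j hjlt] at this
              rcases this with h' | h'
              · exact h'
              · rw [← heq] at h'
                exact absurd h' hane
            · have : φ₂ (E2.x (j+1)) ∈ φ₁ '' E1.D (i+1) := by
                apply hss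
                rw [hins2 j hjlt]; exact Set.mem_insert _ _
              rw [hins1 i hilt] at this
              rcases this with h' | h'
              · exact h'.symm
              · rw [heq] at h'
                exact absurd h' hbne
        obtain ⟨bl, hbl⟩ := mkBlock hB₁ hB₂ E1 E2 hR1 hR2 hr1 hr2 hab
          (Or.inr ⟨hilt, rfl, rfl⟩) (Or.inr ⟨hjlt, rfl, rfl⟩)
        refine prepend (i+1) (j+1) bl hbl (ih (i+1) (j+1) hilt hjlt (by omega) ?_)
        rw [hins1 i hilt, hins2 j hjlt, heq, hab]
end FanAux

namespace FanAux
open Set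

/-- nodes of the amalgamating fan: a root plus `T` disjoint paths -/
abbrev CNode (T : ℕ) (sz : ℕ → ℕ) : Type := Option ((t : Fin T) × Fin (sz t.val))

def Cle {T : ℕ} {sz : ℕ → ℕ} : CNode T sz → CNode T sz → Prop
  | none, _ => True
  | some _, none => False
  | some a, some b => a.1 = b.1 ∧ a.2.val ≤ b.2.val

lemma cle_none {T : ℕ} {sz : ℕ → ℕ} (c : CNode T sz) : Cle none c := trivial
lemma cle_some_some {T : ℕ} {sz : ℕ → ℕ} {a b : (t : Fin T) × Fin (sz t.val)} :
    Cle (some a) (some b) ↔ a.1 = b.1 ∧ a.2.val ≤ b.2.val := Iff.rfl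

def Cfan (T : ℕ) (sz : ℕ → ℕ) : FiniteFan where
  carrier := CNode T sz
  fintype := inferInstance
  ord :=
  { le := Cle
    lt := fun a b => Cle a b ∧ ¬ Cle b a
    lt_iff_le_not_ge := fun _ _ => Iff.rfl
    le_refl := by
      intro c
      match c with
      | none => trivial
      | some a => exact ⟨rfl, le_refl _⟩
    le_trans := by
      intro c d e hcd hde
      match c, d, e with
      | none, _, _ => trivial
      | some a, none, _ => exact hcd.elim
      | some a, some b, none => exact hde.elim
      | some a, some b, some c =>
        exact ⟨hcd.1.trans hde.1, hcd.2.trans hde.2⟩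
    le_antisymm := by
      intro c d hcd hdc
      match c, d with
      | none, none => rfl
      | none, some a => exact hdc.elim
      | some a, none => exact hcd.elim
      | some ⟨t, p⟩, some ⟨t', p'⟩ =>
        obtain rfl : t = t' := hcd.1
        have : p = p' := Fin.ext (le_antisymm hcd.2 hdc.2)
        rw [this] }
  root := none
  root_le := fun _ => trivial
  down_chain := by
    intro a x y hx hy
    match x, y, a with
    | none, y, a => exact Or.inl trivial
    | some b, none, a => exact Or.inr trivial
    | some b, some c, none => exact hx.elim
    | some b, some c, some d =>
      obtain ⟨h1, h2⟩ := hx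
      obtain ⟨h3, h4⟩ := hy
      have : b.1 = c.1 := h1.trans h3.symm
      rcases le_total b.2.val c.2.val with h | h
      · exact Or.inl ⟨this, h⟩
      · exact Or.inr ⟨this.symm, h⟩
  up_chain := by
    intro a ha x y hx hy
    match a, x, y with
    | none, _, _ => exact absurd rfl ha
    | some b, none, y => exact hx.elim
    | some b, some c, none => exact hy.elim
    | some b, some c, some d =>
      obtain ⟨h1, h2⟩ := hx
      obtain ⟨h3, h4⟩ := hy
      have : c.1 = d.1 := h1.symm.trans h3
      rcases le_total c.2.val d.2.val with h | h
      · exact Or.inl ⟨this, h⟩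
      · exact Or.inr ⟨this.symm, h⟩

lemma Cfan_lt {T : ℕ} {sz : ℕ → ℕ} {c d : CNode T sz} :
    (Cfan T sz).ord.lt c d ↔ Cle c d ∧ ¬ Cle d c := lt_iff_le_not_ge

/-- characterization of covers in `Cfan` -/
lemma Cfan_covby {T : ℕ} {sz : ℕ → ℕ} {c d : CNode T sz} (h : (Cfan T sz).covby c d) :
    (c = none ∧ ∃ (t : Fin T) (p : Fin (sz t.val)), p.val = 0 ∧ d = some ⟨t, p⟩) ∨
    (∃ (t : Fin T) (p q : Fin (sz t.val)), c = some ⟨t, p⟩ ∧ d = some ⟨t, q⟩ ∧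
      q.val = p.val + 1) := by
  obtain ⟨hlt, hcov⟩ := h
  rw [Cfan_lt] at hlt
  match c, d with
  | _, none =>
    exfalso
    exact hlt.2 (cle_none _)
  | none, some ⟨t, p⟩ =>
    left
    refine ⟨rfl, t, p, ?_, rfl⟩
    by_contra hp
    have hp0 : 0 < p.val := Nat.pos_of_ne_zero hp
    have h0lt : (0 : ℕ) < sz t.val := lt_trans hp0 p.isLt
    set z : CNode T sz := some ⟨t, ⟨0, h0lt⟩⟩ with hz
    refine hcov z ?_ ?_
    · rw [Cfan_lt]
      exact ⟨trivial, fun hc => hc.elim⟩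
    · rw [Cfan_lt]
      constructor
      · exact ⟨rfl, Nat.zero_le _⟩
      · rintro ⟨-, hle⟩
        dsimp only at hle
        omega
  | some ⟨t, p⟩, some ⟨t', q⟩ =>
    right
    obtain ⟨h1, h2⟩ := hlt.1
    simp only at h1
    subst h1
    have hpq : p.val < q.val := by
      rcases lt_or_eq_of_le h2 with h | h
      · exact h
      · exfalso
        exact hlt.2 ⟨rfl, le_of_eq h.symm⟩
    refine ⟨t, p, q, rfl, rfl, ?_⟩
    by_contra hq
    have hlt2 : p.val + 1 < q.val := by omega
    have hvalid : p.val + 1 < sz t.val := lt_trans hlt2 q.isLt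
    set z : CNode T sz := some ⟨t, ⟨p.val + 1, hvalid⟩⟩ with hz
    refine hcov z ?_ ?_
    · rw [Cfan_lt]
      constructor
      · exact ⟨rfl, by dsimp only; omega⟩
      · rintro ⟨-, hle⟩
        dsimp only at hle
        omega
    · rw [Cfan_lt]
      constructor
      · exact ⟨rfl, by dsimp only; omega⟩
      · rintro ⟨-, hle⟩
        dsimp only at hle
        omega

section ChainC

variable {T : ℕ} {sz : ℕ → ℕ}

/-- offsets -/
def offf (sz : ℕ → ℕ) (t : ℕ) : ℕ := ∑ s ∈ Finset.range t, sz s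

lemma offf_succ (sz : ℕ → ℕ) (t : ℕ) : offf sz (t+1) = offf sz t + sz t :=
  Finset.sum_range_succ _ _

lemma offf_mono (sz : ℕ → ℕ) {t t' : ℕ} (h : t ≤ t') : offf sz t ≤ offf sz t' :=
  Finset.sum_le_sum_of_subset (Finset.range_subset_range.2 h)

def gidx : CNode T sz → ℕ
  | none => 0
  | some a => 1 + offf sz a.1.val + a.2.val

lemma gidx_lt_top (c : CNode T sz) : gidx c < 1 + offf sz T := by
  match c with
  | none => simp [gidx]
  | some ⟨t, p⟩ =>
    simp only [gidx]
    have h1 : p.val < sz t.val := p.isLt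
    have h2 : offf sz t.val + sz t.val = offf sz (t.val + 1) := (offf_succ sz t.val).symm
    have h3 : offf sz (t.val + 1) ≤ offf sz T := offf_mono sz t.isLt
    omega

lemma gidx_inj : Function.Injective (gidx : CNode T sz → ℕ) := by
  intro c d h
  match c, d with
  | none, none => rfl
  | none, some a =>
    exfalso
    simp only [gidx] at h
    omega
  | some a, none =>
    exfalso
    simp only [gidx] at h
    omega
  | some ⟨t, p⟩, some ⟨t', p'⟩ =>
    simp only [gidx] at h
    rcases lt_trichotomy t.val t'.val with hlt | heq | hlt
    · exfalso
      have h2 : offf sz (t.val + 1) ≤ offf sz t'.val := offf_mono sz hlt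
      have h3 := offf_succ sz t.val
      have h4 := p.isLt
      omega
    · obtain rfl : t = t' := Fin.ext heq
      have : p.val = p'.val := by omega
      rw [Fin.ext this]
    · exfalso
      have h2 : offf sz (t'.val + 1) ≤ offf sz t.val := offf_mono sz hlt
      have h3 := offf_succ sz t'.val
      have h4 := p'.isLt
      omega

lemma gidx_mono {c d : CNode T sz} (h : Cle c d) : gidx c ≤ gidx d := by
  match c, d with
  | none, _ => simp [gidx]
  | some a, none => exact h.elim
  | some ⟨t, p⟩, some ⟨t', p'⟩ =>
    obtain ⟨h1, h2⟩ := h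
    simp only at h1
    subst h1
    simp only [gidx]
    dsimp only at h2 ⊢
    omega

/-- the canonical chain on `Cfan` -/
def SC (T : ℕ) (sz : ℕ → ℕ) (k : ℕ) : Set (CNode T sz) := {c | gidx c < k}

def 𝒞C (T : ℕ) (sz : ℕ → ℕ) : Set (Set (CNode T sz)) := Set.range (SC T sz)

lemma SC_mono {k k' : ℕ} (h : k ≤ k') : SC T sz k ⊆ SC T sz k' :=
  fun c hc => lt_of_lt_of_le hc h

lemma dcmax_𝒞C (T : ℕ) (sz : ℕ → ℕ) : DCMaxChain (Cfan T sz) (𝒞C T sz) := by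
  classical
  refine ⟨?_, ?_, ?_⟩
  · rintro C ⟨k, rfl⟩
    intro c d hcd hd
    exact lt_of_le_of_lt (gidx_mono hcd) hd
  · rintro C1 ⟨k1, rfl⟩ C2 ⟨k2, rfl⟩ hne
    rcases le_total k1 k2 with h | h
    · exact Or.inl (SC_mono h)
    · exact Or.inr (SC_mono h)
  · intro C hDC hchain
    have hex : ∃ k, C ⊆ SC T sz k := by
      refine ⟨1 + offf sz T, fun c _ => gidx_lt_top c⟩
    have hk0sub : C ⊆ SC T sz (Nat.find hex) := Nat.find_spec hex
    rcases Nat.eq_zero_or_pos (Nat.find hex) with hz | hpos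
    · refine ⟨0, ?_⟩
      rw [hz] at hk0sub
      have h1 : C = ∅ := by
        apply Set.eq_empty_of_subset_empty
        intro c hc
        exact absurd (show gidx c < 0 from hk0sub hc) (Nat.not_lt_zero _)
      have h2 : SC T sz 0 = ∅ := by
        ext c
        simp [SC]
      rw [h1, h2]
      rfl
    · obtain ⟨k, hk⟩ : ∃ k, Nat.find hex = k + 1 := ⟨Nat.find hex - 1, by omega⟩
      rw [hk] at hk0sub
      have hnot : ¬ C ⊆ SC T sz k := Nat.find_min hex (by omega)
      -- C is comparable with SC k
      rcases eq_or_ne C (SC T sz k) with he | he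
      · exact ⟨k, he.symm⟩
      have hcomp : SC T sz k ⊆ C := by
        have := hchain (Set.mem_insert _ _) (Set.mem_insert_of_mem _ ⟨k, rfl⟩) he
        rcases this with h | h
        · exact absurd h hnot
        · exact h
      refine ⟨k + 1, ?_⟩
      apply Set.Subset.antisymm
      · -- SC (k+1) ⊆ C
        intro z hz
        have hzk : gidx z < k + 1 := hz
        rcases lt_or_eq_of_le (Nat.lt_succ_iff.1 hzk) with h | h
        · exact hcomp h
        · -- gidx z = k : find the witness in C \ SC k
          obtain ⟨w, hw, hwn⟩ : ∃ w ∈ C, w ∉ SC T sz k := by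
            by_contra hcon
            push_neg at hcon
            exact hnot hcon
          have hwk : gidx w = k := by
            have h1 : gidx w < k + 1 := hk0sub hw
            have h2 : ¬ gidx w < k := hwn
            omega
          have : w = z := gidx_inj (hwk.trans h.symm)
          exact this ▸ hw
      · exact hk0sub

end ChainC
end FanAux

namespace FanAux
open Set

/-- one coordinate of a certified block -/
structure HalfOK (B : FiniteFan) (D : ℕ → Set B.carrier) (i i' : ℕ)
    (lb : List B.carrier) : Prop where
  ne : lb ≠ []
  hd : lb.head? = some B.root
  chain : List.Chain' B.R lb
  pre : ∀ p : ℕ, ∃ k, i ≤ k ∧ k ≤ i' ∧ D i ∪ {b | b ∈ lb.take p} = D k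
  tot : D i ∪ {b | b ∈ lb} = D i'
  mono : i ≤ i'

variable {A B₁ B₂ : FiniteFan}

lemma BlockOK.half1 {φ₁ : B₁.carrier → A.carrier} {φ₂ : B₂.carrier → A.carrier}
    {D : ℕ → Set B₁.carrier} {E : ℕ → Set B₂.carrier} {i i' j j' : ℕ}
    {bl : List (B₁.carrier × B₂.carrier)}
    (h : BlockOK φ₁ φ₂ D E i i' j j' bl) : HalfOK B₁ D i i' (bl.map Prod.fst) where
  ne := by simp [h.ne]
  hd := by rw [List.head?_map, h.hd]; rfl
  chain := by
    exact (List.isChain_map _).2 (List.IsChain.imp (fun {a b} hab => hab.1) h.chain)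
  pre := by
    intro p
    obtain ⟨k, h1, h2, h3⟩ := h.pre1 (bl.take p) (List.take_prefix _ _)
    refine ⟨k, h1, h2, ?_⟩
    rw [← h3, ← List.map_take]
    congr 1
    ext b
    constructor
    · intro hb
      obtain ⟨a, ha, rfl⟩ := List.mem_map.1 hb
      exact ⟨a, ha, rfl⟩
    · rintro ⟨a, ha, rfl⟩
      exact List.mem_map.2 ⟨a, ha, rfl⟩
  tot := by
    have h3 := h.tot1
    rw [← h3]
    congr 1
    ext b
    constructor
    · intro hb
      obtain ⟨a, ha, rfl⟩ := List.mem_map.1 hb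
      exact ⟨a, ha, rfl⟩
    · rintro ⟨a, ha, rfl⟩
      exact List.mem_map.2 ⟨a, ha, rfl⟩
  mono := h.mono1

lemma BlockOK.half2 {φ₁ : B₁.carrier → A.carrier} {φ₂ : B₂.carrier → A.carrier}
    {D : ℕ → Set B₁.carrier} {E : ℕ → Set B₂.carrier} {i i' j j' : ℕ}
    {bl : List (B₁.carrier × B₂.carrier)}
    (h : BlockOK φ₁ φ₂ D E i i' j j' bl) : HalfOK B₂ E j j' (bl.map Prod.snd) where
  ne := by simp [h.ne]
  hd := by rw [List.head?_map, h.hd]; rfl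
  chain := by
    exact (List.isChain_map _).2 (List.IsChain.imp (fun {a b} hab => hab.2) h.chain)
  pre := by
    intro p
    obtain ⟨k, h1, h2, h3⟩ := h.pre2 (bl.take p) (List.take_prefix _ _)
    refine ⟨k, h1, h2, ?_⟩
    rw [← h3, ← List.map_take]
    congr 1
    ext b
    constructor
    · intro hb
      obtain ⟨a, ha, rfl⟩ := List.mem_map.1 hb
      exact ⟨a, ha, rfl⟩
    · rintro ⟨a, ha, rfl⟩
      exact List.mem_map.2 ⟨a, ha, rfl⟩
  tot := by
    have h3 := h.tot2
    rw [← h3]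
    congr 1
    ext b
    constructor
    · intro hb
      obtain ⟨a, ha, rfl⟩ := List.mem_map.1 hb
      exact ⟨a, ha, rfl⟩
    · rintro ⟨a, ha, rfl⟩
      exact List.mem_map.2 ⟨a, ha, rfl⟩
  mono := h.mono2

/-- the projection map from the amalgam to one side -/
def ψf (B : FiniteFan) (T : ℕ) (sz : ℕ → ℕ) (lab : ℕ → List B.carrier) :
    CNode T sz → B.carrier
  | none => B.root
  | some a => (lab a.1.val).getD a.2.val B.root

theorem assemble {B : FiniteFan} {𝒞B : Set (Set B.carrier)} (hB : DCMaxChain B 𝒞B)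
    (E : FanEnum B 𝒞B) (T : ℕ) (sz : ℕ → ℕ) (lab : ℕ → List B.carrier)
    (hlen : ∀ t, t < T → (lab t).length = sz t)
    (ii : ℕ → ℕ) (h0 : ii 0 = 1) (hT : ii T = E.m)
    (hhalf : ∀ t, t < T → HalfOK B E.D (ii t) (ii (t+1)) (lab t)) :
    FcEpi (Cfan T sz) B (𝒞C T sz) 𝒞B (ψf B T sz lab) := by
  classical
  set ψ := ψf B T sz lab with hψ
  -- value of ψ at an inner node
  have hnode : ∀ (t : Fin T) (p : Fin (sz t.val)),
      ψ (some ⟨t, p⟩) = (lab t.val).get ⟨p.val, by rw [hlen t.val t.isLt]; exact p.isLt⟩ := by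
    intro t p
    simp only [hψ, ψf]
    exact List.getD_eq_getElem _ _ _
  -- SC 1 is the root alone
  have hSC1 : SC T sz 1 = {(none : CNode T sz)} := by
    ext c
    match c with
    | none => simp [SC, gidx]
    | some a => simp [SC, gidx]
  -- the image of SC (1 + offf t) and intermediate stages
  have hQ : ∀ t, t < T → ∀ p, p ≤ sz t →
      ψ '' SC T sz (1 + offf sz t) = E.D (ii t) →
      ψ '' SC T sz (1 + offf sz t + p) = E.D (ii t) ∪ {b | b ∈ (lab t).take p} := by
    intro t ht p hp hbase
    induction p with
    | zero => simpa using hbase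
    | succ p ihp =>
      have hplt : p < sz t := by omega
      have hplab : p < (lab t).length := by rw [hlen t ht]; exact hplt
      set c₀ : CNode T sz := some ⟨⟨t, ht⟩, ⟨p, hplt⟩⟩ with hc₀
      have hgc₀ : gidx c₀ = 1 + offf sz t + p := rfl
      have hdec : SC T sz (1 + offf sz t + (p+1)) = insert c₀ (SC T sz (1 + offf sz t + p)) := by
        ext z
        simp only [SC, Set.mem_insert_iff, Set.mem_setOf_eq]
        constructor
        · intro hz
          rcases Nat.lt_or_ge (gidx z) (1 + offf sz t + p) with h' | h'
          · exact Or.inr h'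
          · have : gidx z = 1 + offf sz t + p := by omega
            exact Or.inl (gidx_inj (this.trans hgc₀.symm))
        · rintro (rfl | hz)
          · omega
          · omega
      rw [hdec, Set.image_insert_eq, ihp (by omega)]
      have hval : ψ c₀ = (lab t).get ⟨p, hplab⟩ := hnode ⟨t, ht⟩ ⟨p, hplt⟩
      rw [hval]
      have htake : (lab t).take (p+1) = (lab t).take p ++ [(lab t).get ⟨p, hplab⟩] := by
        have h := List.take_concat_get hplab
        rw [List.concat_eq_append] at h
        rw [← h]
        rfl
      ext b
      simp only [Set.mem_insert_iff, Set.mem_union, Set.mem_setOf_eq, htake, List.mem_append,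
        List.mem_singleton]
      tauto
  have hP0 : ∀ t, t ≤ T → ψ '' SC T sz (1 + offf sz t) = E.D (ii t) := by
    intro t
    induction t with
    | zero =>
      intro _
      have : offf sz 0 = 0 := rfl
      rw [this, hSC1, h0, E.D1_root hB]
      simp only [Set.image_singleton]
      congr 1
    | succ t iht =>
      intro ht
      have ht' : t < T := by omega
      have hhalft := hhalf t ht'
      have hbase := iht (by omega)
      have := hQ t ht' (sz t) (le_refl _) hbase
      have htake : (lab t).take (sz t) = lab t := by
        apply List.take_of_length_le
        rw [hlen t ht']
      rw [htake] at this
      have harith : 1 + offf sz t + sz t = 1 + offf sz (t+1) := by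
        rw [offf_succ]; omega
      rw [harith] at this
      rw [this, hhalft.tot]
  -- every chain member's image is a member of the enumeration
  have himg : ∀ k, ∃ i0, ψ '' SC T sz k = E.D i0 := by
    intro k
    rcases Nat.eq_zero_or_pos k with rfl | hk1
    · refine ⟨0, ?_⟩
      have : SC T sz 0 = ∅ := by ext c; simp [SC]
      rw [this, E.D0, Set.image_empty]
    rcases Nat.lt_or_ge k (1 + offf sz T) with hktop | hktop
    · -- find the block containing position k
      have hT0 : 0 < T := by
        by_contra hT0
        have : T = 0 := by omega
        rw [this] at hktop
        have : offf sz 0 = 0 := rfl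
        omega
      have hexP : ∃ t, k ≤ offf sz (t+1) := by
        refine ⟨T - 1, ?_⟩
        have : T - 1 + 1 = T := by omega
        rw [this]
        omega
      set t0 := Nat.find hexP with ht0
      have hfind : k ≤ offf sz (t0+1) := Nat.find_spec hexP
      have hlow : 1 + offf sz t0 ≤ k := by
        rcases Nat.eq_zero_or_pos t0 with hz | hpos
        · rw [hz]
          have : offf sz 0 = 0 := rfl
          omega
        · have hmin : ¬ k ≤ offf sz (t0 - 1 + 1) := Nat.find_min hexP (by omega)
          have : t0 - 1 + 1 = t0 := by omega
          rw [this] at hmin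
          omega
      have ht0T : t0 < T := by
        have : t0 ≤ T - 1 := Nat.find_min' hexP (by
          have : T - 1 + 1 = T := by omega
          rw [this]
          omega)
        omega
      set p := k - 1 - offf sz t0 with hp
      have hpsz : p ≤ sz t0 := by
        have := offf_succ sz t0
        omega
      have hkeq : k = 1 + offf sz t0 + p := by omega
      have := hQ t0 ht0T p hpsz (hP0 t0 (by omega))
      obtain ⟨k', h1, h2, h3⟩ := (hhalf t0 ht0T).pre p
      refine ⟨k', ?_⟩
      rw [hkeq, this, h3]
    · -- beyond the top everything is the whole fan
      have huniv : SC T sz k = SC T sz (1 + offf sz T) := by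
        apply Set.Subset.antisymm
        · intro c _
          exact gidx_lt_top c
        · exact SC_mono hktop
      refine ⟨ii T, ?_⟩
      rw [huniv, hP0 T (le_refl _)]
  -- surjectivity
  have hsurj : Function.Surjective ψ := by
    intro b
    have hb : b ∈ E.D E.m := by rw [E.Dtop E.m (le_refl _)]; trivial
    rw [← hT, ← hP0 T (le_refl _)] at hb
    obtain ⟨c, _, hc⟩ := hb
    exact ⟨c, hc⟩
  -- R-preservation
  have hRpres : ∀ s t, (Cfan T sz).R s t → B.R (ψ s) (ψ t) := by
    intro s t hst
    rcases hst with rfl | hcov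
    · exact Or.inl rfl
    rcases Cfan_covby hcov with ⟨rfl, t', p', hp0, rfl⟩ | ⟨t', p', q', rfl, rfl, hq⟩
    · -- root cover: both map near the root
      left
      simp only [hψ, ψf]
      have hd := (hhalf t'.val t'.isLt).hd
      have hp0' : p'.val = 0 := hp0
      rw [hp0']
      cases hlab : lab t'.val with
      | nil =>
        rw [hlab] at hd
        simp at hd
      | cons a l =>
        rw [hlab] at hd
        simp only [List.head?_cons, Option.some.injEq] at hd
        rw [List.getD_cons_zero]
        exact hd.symm
    · -- a step inside a path
      have hch := (hhalf t'.val t'.isLt).chain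
      rcases q' with ⟨qv, hql⟩
      have hq' : qv = p'.val + 1 := hq
      subst hq'
      rw [hnode t' p', hnode t' ⟨p'.val + 1, hql⟩]
      have hlt : p'.val + 1 < (lab t'.val).length := by
        rw [hlen t'.val t'.isLt]
        exact hql
      exact List.isChain_iff_getElem.1 hch p'.val (by omega)
  -- ncard step bound
  have hstepcard : ∀ k, (ψ '' SC T sz (k+1)).ncard ≤ (ψ '' SC T sz k).ncard + 1 := by
    intro k
    by_cases hex : ∃ c : CNode T sz, gidx c = k
    · obtain ⟨c, hc⟩ := hex
      have : SC T sz (k+1) = insert c (SC T sz k) := by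
        ext z
        simp only [SC, Set.mem_insert_iff, Set.mem_setOf_eq]
        constructor
        · intro hz
          rcases Nat.lt_or_ge (gidx z) k with h' | h'
          · exact Or.inr h'
          · have : gidx z = k := by omega
            exact Or.inl (gidx_inj (this.trans hc.symm))
        · rintro (rfl | hz) <;> omega
      rw [this, Set.image_insert_eq]
      exact Set.ncard_insert_le _ _
    · push_neg at hex
      have : SC T sz (k+1) = SC T sz k := by
        ext z
        simp only [SC, Set.mem_setOf_eq]
        have := hex z
        omega
      rw [this]
      omega
  -- normalize index below m
  have hnorm : ∀ i0, ∃ i1, i1 ≤ E.m ∧ E.D i0 = E.D i1 := by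
    intro i0
    rcases le_or_gt i0 E.m with h | h
    · exact ⟨i0, h, rfl⟩
    · exact ⟨E.m, le_refl _, by rw [E.Dtop i0 (by omega), E.Dtop E.m (le_refl _)]⟩
  have himg' : ∀ k, ∃ i0, i0 ≤ E.m ∧ ψ '' SC T sz k = E.D i0 := by
    intro k
    obtain ⟨i0, hi0⟩ := himg k
    obtain ⟨i1, hi1, he⟩ := hnorm i0
    exact ⟨i1, hi1, hi0.trans he⟩
  -- discrete intermediate value: every index below m is attained
  have hIVT : ∀ i0, i0 ≤ E.m → ∃ k, ψ '' SC T sz k = E.D i0 := by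
    intro i0 hi0
    set g : ℕ → ℕ := fun k => (ψ '' SC T sz k).ncard with hg
    have hg0 : g 0 = 0 := by
      simp only [hg]
      have : SC T sz 0 = ∅ := by ext c; simp [SC]
      rw [this]
      simp
    have hgtop : g (1 + offf sz T) = E.m := by
      simp only [hg]
      rw [hP0 T (le_refl _), hT]
      exact E.card E.m (le_refl _)
    have key : ∀ K, i0 ≤ g K → ∃ k, k ≤ K ∧ g k = i0 := by
      intro K
      induction K with
      | zero =>
        intro h
        have : g 0 = i0 := by omega
        exact ⟨0, le_refl _, this⟩
      | succ K ihK =>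
        intro h
        rcases le_or_gt i0 (g K) with h' | h'
        · obtain ⟨k, hk1, hk2⟩ := ihK h'
          exact ⟨k, by omega, hk2⟩
        · have := hstepcard K
          have : g (K+1) = i0 := by
            simp only [hg] at *
            omega
          exact ⟨K+1, le_refl _, this⟩
    obtain ⟨k, _, hk⟩ := key (1 + offf sz T) (by omega)
    obtain ⟨i1, hi1, he⟩ := himg' k
    refine ⟨k, ?_⟩
    rw [he]
    have : i1 = i0 := by
      have := E.card i1 hi1
      simp only [hg] at hk
      rw [he, this] at hk
      omega
    rw [this]
  -- conclusion
  refine ⟨⟨hsurj, hRpres⟩, ?_⟩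
  ext CC
  constructor
  · rintro ⟨S, ⟨k, rfl⟩, rfl⟩
    obtain ⟨i0, hi0⟩ := himg k
    rw [E.rangeD]
    exact hi0 ▸ ⟨i0, rfl⟩
  · intro hCC
    rw [E.rangeD] at hCC
    obtain ⟨i0, rfl⟩ := hCC
    obtain ⟨i1, hi1, he⟩ := hnorm i0
    obtain ⟨k, hk⟩ := hIVT i1 hi1
    exact ⟨SC T sz k, ⟨k, rfl⟩, by exact hk.trans he.symm⟩

end FanAux

namespace FanAux
open Set

/-- The amalgamation property of `F_c`. -/
theorem AP (A B₁ B₂ : FiniteFan) (𝒞A : Set (Set A.carrier))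
    (𝒞B₁ : Set (Set B₁.carrier)) (𝒞B₂ : Set (Set B₂.carrier))
    (φ₁ : B₁.carrier → A.carrier) (φ₂ : B₂.carrier → A.carrier)
    (hA : DCMaxChain A 𝒞A) (hB₁ : DCMaxChain B₁ 𝒞B₁) (hB₂ : DCMaxChain B₂ 𝒞B₂)
    (hφ₁ : FcEpi B₁ A 𝒞B₁ 𝒞A φ₁) (hφ₂ : FcEpi B₂ A 𝒞B₂ 𝒞A φ₂) :
    ∃ (C : FiniteFan) (𝒞C : Set (Set C.carrier))
      (ψ₁ : C.carrier → B₁.carrier) (ψ₂ : C.carrier → B₂.carrier),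
      DCMaxChain C 𝒞C ∧ FcEpi C B₁ 𝒞C 𝒞B₁ ψ₁ ∧ FcEpi C B₂ 𝒞C 𝒞B₂ ψ₂ ∧
      φ₁ ∘ ψ₁ = φ₂ ∘ ψ₂ := by
  obtain ⟨E1⟩ := exists_fanEnum hB₁
  obtain ⟨E2⟩ := exists_fanEnum hB₂
  have hinit : φ₁ '' E1.D 1 = φ₂ '' E2.D 1 := by
    rw [E1.D1_root hB₁, E2.D1_root hB₂, Set.image_singleton, Set.image_singleton,
      FcEpi.root_eq hA hB₁ hφ₁, FcEpi.root_eq hA hB₂ hφ₂]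
  obtain ⟨T, blk, ii, jj, hii0, hjj0, hiiT, hjjT, hblocks⟩ :=
    staircase hA hB₁ hB₂ hφ₁ hφ₂ E1 E2 (E1.m + E2.m) 1 1 E1.m_pos E2.m_pos (by omega) hinit
  set sz : ℕ → ℕ := fun t => (blk t).length with hsz
  set lab1 : ℕ → List B₁.carrier := fun t => (blk t).map Prod.fst with hlab1
  set lab2 : ℕ → List B₂.carrier := fun t => (blk t).map Prod.snd with hlab2
  have hlen1 : ∀ t, t < T → (lab1 t).length = sz t := by
    intro t _
    simp [hlab1, hsz]
  have hlen2 : ∀ t, t < T → (lab2 t).length = sz t := by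
    intro t _
    simp [hlab2, hsz]
  have hepi1 := assemble hB₁ E1 T sz lab1 hlen1 ii hii0 hiiT
    (fun t ht => (hblocks t ht).half1)
  have hepi2 := assemble hB₂ E2 T sz lab2 hlen2 jj hjj0 hjjT
    (fun t ht => (hblocks t ht).half2)
  refine ⟨Cfan T sz, 𝒞C T sz, ψf B₁ T sz lab1, ψf B₂ T sz lab2,
    dcmax_𝒞C T sz, hepi1, hepi2, ?_⟩
  funext c
  match c with
  | none =>
    change φ₁ B₁.root = φ₂ B₂.root
    rw [FcEpi.root_eq hA hB₁ hφ₁, FcEpi.root_eq hA hB₂ hφ₂]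
  | some ⟨t, p⟩ =>
    change φ₁ ((lab1 t.val).getD p.val B₁.root) = φ₂ ((lab2 t.val).getD p.val B₂.root)
    have hp : p.val < (blk t.val).length := p.isLt
    have hg1 : (lab1 t.val).getD p.val B₁.root = ((blk t.val).get ⟨p.val, hp⟩).1 := by
      rw [List.getD_eq_getElem _ _ (by simpa [hlab1] using hp)]
      simp [hlab1]
    have hg2 : (lab2 t.val).getD p.val B₂.root = ((blk t.val).get ⟨p.val, hp⟩).2 := by
      rw [List.getD_eq_getElem _ _ (by simpa [hlab2] using hp)]
      simp [hlab2]
    rw [hg1, hg2]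
    exact (hblocks t.val t.isLt).sync _ (List.get_mem _ ⟨p.val, hp⟩)

/-- the one-point fan -/
def unitFan : FiniteFan where
  carrier := PUnit
  fintype := inferInstance
  ord := inferInstance
  root := PUnit.unit
  root_le := fun a => le_of_eq (Subsingleton.elim _ _)
  down_chain := fun a x y _ _ => Or.inl (le_of_eq (Subsingleton.elim _ _))
  up_chain := fun a _ x y _ _ => Or.inl (le_of_eq (Subsingleton.elim _ _))

instance : Subsingleton unitFan.carrier := inferInstanceAs (Subsingleton PUnit)

def 𝒞U : Set (Set unitFan.carrier) := {∅, Set.univ}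

lemma dcmax_𝒞U : DCMaxChain unitFan 𝒞U := by
  refine ⟨?_, ?_, ?_⟩
  · rintro C (rfl | rfl) <;> intro x y _ h
    · exact h
    · trivial
  · rintro C1 (rfl | rfl) C2 (rfl | rfl) _
    · exact Or.inl (subset_rfl)
    · exact Or.inl (Set.empty_subset _)
    · exact Or.inr (Set.empty_subset _)
    · exact Or.inl (subset_rfl)
  · intro C _ _
    rcases C.eq_empty_or_nonempty with rfl | hne
    · exact Or.inl rfl
    · right
      simp only [Set.mem_singleton_iff]
      apply Set.eq_univ_of_forall
      intro x
      obtain ⟨y, hy⟩ := hne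
      rwa [Subsingleton.elim x y]

lemma toUnit {B : FiniteFan} {𝒞B : Set (Set B.carrier)} (hB : DCMaxChain B 𝒞B) :
    FcEpi B unitFan 𝒞B 𝒞U (fun _ => PUnit.unit) := by
  refine ⟨⟨fun u => ⟨B.root, Subsingleton.elim _ _⟩, fun s t _ => Or.inl rfl⟩, ?_⟩
  ext S
  constructor
  · rintro ⟨CC, hCC, rfl⟩
    rcases CC.eq_empty_or_nonempty with rfl | hne
    · left
      exact Set.image_empty _
    · right
      simp only [Set.mem_singleton_iff]
      apply Set.eq_univ_of_forall
      intro x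
      obtain ⟨y, hy⟩ := hne
      exact ⟨y, hy, Subsingleton.elim _ _⟩
  · rintro (rfl | rfl)
    · exact ⟨∅, DCMaxChain.empty_mem hB, by exact Set.image_empty _⟩
    · refine ⟨Set.univ, DCMaxChain.univ_mem hB, ?_⟩
      apply Set.eq_univ_of_forall
      intro x
      exact ⟨B.root, trivial, Subsingleton.elim _ _⟩

end FanAux


/-- The class `F_c` of finite fans equipped with downwards closed maximal
chains, with chain-preserving epimorphisms, has the JPP and the AP. -/
theorem stmt_6 :
    (∀ (A B : FiniteFan) (𝒞A : Set (Set A.carrier)) (𝒞B : Set (Set B.carrier)),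
      DCMaxChain A 𝒞A → DCMaxChain B 𝒞B →
      ∃ (C : FiniteFan) (𝒞C : Set (Set C.carrier))
        (φ : C.carrier → A.carrier) (ψ : C.carrier → B.carrier),
        DCMaxChain C 𝒞C ∧ FcEpi C A 𝒞C 𝒞A φ ∧ FcEpi C B 𝒞C 𝒞B ψ) ∧
    (∀ (A B₁ B₂ : FiniteFan) (𝒞A : Set (Set A.carrier))
      (𝒞B₁ : Set (Set B₁.carrier)) (𝒞B₂ : Set (Set B₂.carrier))
      (φ₁ : B₁.carrier → A.carrier) (φ₂ : B₂.carrier → A.carrier),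
      DCMaxChain A 𝒞A → DCMaxChain B₁ 𝒞B₁ → DCMaxChain B₂ 𝒞B₂ →
      FcEpi B₁ A 𝒞B₁ 𝒞A φ₁ → FcEpi B₂ A 𝒞B₂ 𝒞A φ₂ →
      ∃ (C : FiniteFan) (𝒞C : Set (Set C.carrier))
        (ψ₁ : C.carrier → B₁.carrier) (ψ₂ : C.carrier → B₂.carrier),
        DCMaxChain C 𝒞C ∧ FcEpi C B₁ 𝒞C 𝒞B₁ ψ₁ ∧ FcEpi C B₂ 𝒞C 𝒞B₂ ψ₂ ∧
        φ₁ ∘ ψ₁ = φ₂ ∘ ψ₂) := by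
  constructor
  · intro A B 𝒞A 𝒞B hA hB
    obtain ⟨C, 𝒞C, ψ₁, ψ₂, hC, h1, h2, _⟩ :=
      FanAux.AP FanAux.unitFan A B FanAux.𝒞U 𝒞A 𝒞B (fun _ => PUnit.unit)
        (fun _ => PUnit.unit) FanAux.dcmax_𝒞U hA hB (FanAux.toUnit hA) (FanAux.toUnit hB)
    exact ⟨C, 𝒞C, ψ₁, ψ₂, hC, h1, h2⟩
  · intro A B₁ B₂ 𝒞A 𝒞B₁ 𝒞B₂ φ₁ φ₂ hA hB₁ hB₂ hφ₁ hφ₂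
    exact FanAux.AP A B₁ B₂ 𝒞A 𝒞B₁ 𝒞B₂ φ₁ φ₂ hA hB₁ hB₂ hφ₁ hφ₂
end

section
/- The expansion F_c of the class F of finite fans is reasonable: for any finite fans A and B, any fan epimorphism φ: B → A, and any downwards closed maximal chain 𝒞^A on A, there exists a downwards closed maximal chain 𝒞^B on B such that φ: (B, 𝒞^B) → (A, 𝒞^A) is an epimorphism in F_c, i.e., {φ(C) : C ∈ 𝒞^B} = 𝒞^A. -/
lemma fanEpi_mono (B A : FiniteFan) (φ : B.carrier → A.carrier) (hφ : FanEpi B A φ) :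
    ∀ s t : B.carrier, B.ord.le s t → A.ord.le (φ s) (φ t) := by
  letI := B.ord
  letI := A.ord
  have hwf : WellFoundedLT B.carrier := Finite.to_wellFoundedLT
  have main : ∀ t s : B.carrier, s ≤ t → φ s ≤ φ t := by
    intro t
    refine hwf.wf.induction (C := fun t => ∀ s, s ≤ t → φ s ≤ φ t) t ?_
    intro t ih s hst
    rcases eq_or_lt_of_le hst with rfl | hlt
    · exact le_refl _
    · obtain ⟨u, hu, hmaxu⟩ := Set.Finite.exists_maximalFor id {x : B.carrier | s ≤ x ∧ x < t}
        (Set.toFinite _) ⟨s, le_refl s, hlt⟩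
      have hut : B.covby u t := by
        refine ⟨hu.2, ?_⟩
        intro p hup hpt
        have hp : p ∈ {x : B.carrier | s ≤ x ∧ x < t} := ⟨le_trans hu.1 hup.le, hpt⟩
        exact absurd (le_antisymm hup.le (hmaxu hp hup.le)) (ne_of_lt hup)
      have h1 : φ u ≤ φ t := by
        rcases hφ.2 u t (Or.inr hut) with h | h
        · exact le_of_eq h
        · exact le_of_lt h.1
      exact le_trans (ih u hu.2 s hu.1) h1
  exact fun s t h => main t s h

lemma empty_mem_DCMaxChain (A : FiniteFan) (𝒞 : Set (Set A.carrier)) (hA : DCMaxChain A 𝒞) :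
    (∅ : Set A.carrier) ∈ 𝒞 := by
  refine hA.2.2 ∅ (fun x y _ h => h.elim) ?_
  exact hA.2.1.insert (fun b _ _ => Or.inl (Set.empty_subset b))

lemma univ_mem_DCMaxChain (A : FiniteFan) (𝒞 : Set (Set A.carrier)) (hA : DCMaxChain A 𝒞) :
    (Set.univ : Set A.carrier) ∈ 𝒞 := by
  refine hA.2.2 Set.univ (fun x y _ _ => trivial) ?_
  exact hA.2.1.insert (fun b _ _ => Or.inr (Set.subset_univ b))

lemma step_lemma (A : FiniteFan) (𝒞A : Set (Set A.carrier)) (hA : DCMaxChain A 𝒞A)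
    (C : Set A.carrier) (hC : C ∈ 𝒞A) (hCuniv : C ≠ Set.univ) :
    ∃ x : A.carrier, x ∉ C ∧ insert x C ∈ 𝒞A := by
  letI := A.ord
  have huniv : Set.univ ∈ 𝒞A := univ_mem_DCMaxChain A 𝒞A hA
  set S : Set (Set A.carrier) := {E | E ∈ 𝒞A ∧ C ⊂ E} with hS
  have hSne : S.Nonempty := ⟨Set.univ, huniv, Set.ssubset_univ_iff.mpr hCuniv⟩
  obtain ⟨C', hC'S, hC'min⟩ := Set.Finite.exists_minimalFor id S (Set.toFinite _) hSne
  have hleast : ∀ E ∈ S, C' ⊆ E := by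
    intro E hE
    rcases eq_or_ne E C' with rfl | hne
    · exact subset_rfl
    · rcases hA.2.1 hE.1 hC'S.1 hne with h | h
      · exact hC'min hE h
      · exact h
  obtain ⟨x, hxC', hxC⟩ := Set.exists_of_ssubset hC'S.2
  obtain ⟨x, hxS, hxmin⟩ := Set.Finite.exists_minimalFor id (C' \ C) (Set.toFinite _) ⟨x, hxC', hxC⟩
  clear hxC' hxC
  have hdc : A.DownClosed (insert x C) := by
    intro y z hyz hz
    rcases Set.mem_insert_iff.mp hz with rfl | hzC
    · have hyC' : y ∈ C' := hA.1 C' hC'S.1 y z hyz hxS.1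
      by_cases hyC : y ∈ C
      · exact Set.mem_insert_iff.mpr (Or.inr hyC)
      · exact Set.mem_insert_iff.mpr (Or.inl (le_antisymm hyz (hxmin ⟨hyC', hyC⟩ hyz)))
    · exact Set.mem_insert_iff.mpr (Or.inr (hA.1 C hC y z hyz hzC))
  have hins : IsChain (· ⊆ ·) (insert (insert x C) 𝒞A) := by
    refine hA.2.1.insert ?_
    intro E hE hne
    rcases eq_or_ne E C with rfl | hEC
    · exact Or.inr (Set.subset_insert x E)
    · rcases hA.2.1 hC hE hEC.symm with h | h
      · left
        have hsub : C' ⊆ E := hleast E ⟨hE, Set.ssubset_iff_subset_ne.mpr ⟨h, hEC.symm⟩⟩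
        exact Set.insert_subset_iff.mpr ⟨hsub hxS.1, h⟩
      · exact Or.inr (h.trans (Set.subset_insert x C))
  exact ⟨x, hxS.2, hA.2.2 _ hdc hins⟩

lemma chain_greatest {α : Type} (s : Set (Set α)) (hc : IsChain (· ⊆ ·) s)
    (hfin : s.Finite) (hne : s.Nonempty) : ∃ m ∈ s, ∀ c ∈ s, c ⊆ m := by
  obtain ⟨m, hm, hmax⟩ := Set.Finite.exists_maximalFor id s hfin hne
  refine ⟨m, hm, fun c hcs => ?_⟩
  rcases eq_or_ne c m with rfl | hne'
  · exact subset_rfl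
  · rcases hc hcs hm hne' with h | h
    · exact h
    · exact hmax hcs h

/-- The expansion `F_c` of the class of finite fans is reasonable. -/
theorem stmt_8 (A B : FiniteFan) (φ : B.carrier → A.carrier) (hφ : FanEpi B A φ)
    (𝒞A : Set (Set A.carrier)) (hA : DCMaxChain A 𝒞A) :
    ∃ 𝒞B : Set (Set B.carrier), DCMaxChain B 𝒞B ∧ FcEpi B A 𝒞B 𝒞A φ := by
  classical
  have hmono := fanEpi_mono B A φ hφ
  have hsurj := hφ.1
  set P : Set (Set B.carrier) := (fun C => φ ⁻¹' C) '' 𝒞A with hPdef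
  have hPdc : ∀ D ∈ P, B.DownClosed D := by
    rintro D ⟨C, hC, rfl⟩
    intro y z hyz hz
    exact hA.1 C hC (φ y) (φ z) (hmono y z hyz) hz
  have hPchain : IsChain (· ⊆ ·) P := by
    rintro D1 ⟨C1, hC1, rfl⟩ D2 ⟨C2, hC2, rfl⟩ hne
    have hC12 : C1 ≠ C2 := by rintro rfl; exact hne rfl
    rcases hA.2.1 hC1 hC2 hC12 with h | h
    · exact Or.inl (Set.preimage_mono h)
    · exact Or.inr (Set.preimage_mono h)
  set 𝔛 : Set (Set (Set B.carrier)) :=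
    {𝒟 | P ⊆ 𝒟 ∧ (∀ D ∈ 𝒟, B.DownClosed D) ∧ IsChain (· ⊆ ·) 𝒟} with h𝔛
  obtain ⟨𝒞B, h𝒞B, hmax⟩ := Set.Finite.exists_maximalFor id 𝔛 (Set.toFinite _)
    ⟨P, subset_rfl, hPdc, hPchain⟩
  obtain ⟨hP𝒞B, h𝒞Bdc, h𝒞Bchain⟩ := h𝒞B
  have hDCmax : DCMaxChain B 𝒞B := by
    refine ⟨h𝒞Bdc, h𝒞Bchain, fun C hdc hchain => ?_⟩
    have hmem : insert C 𝒞B ∈ 𝔛 := by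
      refine ⟨hP𝒞B.trans (Set.subset_insert _ _), ?_, hchain⟩
      intro D hD
      rcases Set.mem_insert_iff.mp hD with rfl | hD'
      · exact hdc
      · exact h𝒞Bdc D hD'
    have heq : 𝒞B = insert C 𝒞B := Set.Subset.antisymm (Set.subset_insert _ _) (hmax hmem (Set.subset_insert _ _))
    rw [heq]
    exact Set.mem_insert _ _
  refine ⟨𝒞B, hDCmax, hφ, ?_⟩
  apply Set.Subset.antisymm
  · rintro _ ⟨D, hD, rfl⟩
    show φ '' D ∈ 𝒞A
    set T : Set (Set A.carrier) := {C | C ∈ 𝒞A ∧ φ ⁻¹' C ⊆ D} with hT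
    have hTne : T.Nonempty := ⟨∅, empty_mem_DCMaxChain A 𝒞A hA, by simp⟩
    have hTchain : IsChain (· ⊆ ·) T := fun a ha b hb hne => hA.2.1 ha.1 hb.1 hne
    obtain ⟨C₀, hC₀T, hgreat⟩ := chain_greatest T hTchain (Set.toFinite _) hTne
    have hC0sub : C₀ ⊆ φ '' D := by
      calc C₀ = φ '' (φ ⁻¹' C₀) := (Set.image_preimage_eq _ hsurj).symm
        _ ⊆ φ '' D := Set.image_mono hC₀T.2
    by_cases h : C₀ = Set.univ
    · have hD' : D = Set.univ := by
        apply Set.eq_univ_of_univ_subset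
        have := hC₀T.2
        rw [h] at this
        simpa using this
      rw [hD', Set.image_univ, hsurj.range_eq]
      exact univ_mem_DCMaxChain A 𝒞A hA
    · obtain ⟨x, hx, hins⟩ := step_lemma A 𝒞A hA C₀ hC₀T.1 h
      have hDsub : D ⊆ φ ⁻¹' (insert x C₀) := by
        have hmem : φ ⁻¹' (insert x C₀) ∈ 𝒞B := hP𝒞B ⟨_, hins, rfl⟩
        rcases eq_or_ne D (φ ⁻¹' (insert x C₀)) with heq | hne
        · exact heq.le
        · rcases h𝒞Bchain hD hmem hne with h' | h'
          · exact h'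
          · exact absurd (hgreat _ ⟨hins, h'⟩ (Set.mem_insert _ _)) hx
      have himg : φ '' D ⊆ insert x C₀ := by
        rintro a ⟨b, hb, rfl⟩
        exact hDsub hb
      by_cases hxin : x ∈ φ '' D
      · have heq : φ '' D = insert x C₀ :=
          Set.Subset.antisymm himg (Set.insert_subset_iff.mpr ⟨hxin, hC0sub⟩)
        rw [heq]; exact hins
      · have heq : φ '' D = C₀ := by
          apply Set.Subset.antisymm _ hC0sub
          intro a ha
          rcases Set.mem_insert_iff.mp (himg ha) with rfl | h'
          · exact absurd ha hxin
          · exact h'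
        rw [heq]; exact hC₀T.1
  · intro C hC
    exact ⟨φ ⁻¹' C, hP𝒞B ⟨C, hC, rfl⟩, Set.image_preimage_eq C hsurj⟩
end

section
/- Let G and G₁ be Polish groups, let H be a closed subgroup of G such that the quotient uniform space G/H (with the quotient of the right uniformity of G) is precompact, let φ: G → G₁ be a continuous group homomorphism with dense image, and let H₁ be the closure of φ(H) in G₁. Then the quotient uniform space G₁/H₁ (with the quotient of the right uniformity of G₁) is precompact. -/
/-- The quotient uniform space `G/H` (with the quotient of the right uniformity) is
precompact iff for every open symmetric neighbourhood `V` of the identity there are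
finitely many `x₁,…,xₙ ∈ G` with `G = ⋃ᵢ V xᵢ H`. -/
def QuotPrecompact {G : Type*} [Group G] [TopologicalSpace G] (H : Subgroup G) : Prop :=
  ∀ V : Set G, IsOpen V → (1 : G) ∈ V → (∀ g ∈ V, g⁻¹ ∈ V) →
    ∃ t : Finset G, ∀ g : G, ∃ x ∈ t, ∃ v ∈ V, ∃ h ∈ H, g = v * x * h

/-- if `G, G₁` are Polish groups, `H ≤ G` is closed with `G/H` precompact,
`φ : G → G₁` is a continuous homomorphism with dense image and `H₁` is the closure of
`φ(H)`, then `G₁/H₁` is precompact. -/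
theorem stmt_15 {G G₁ : Type*}
    [Group G] [TopologicalSpace G] [IsTopologicalGroup G] [PolishSpace G]
    [Group G₁] [TopologicalSpace G₁] [IsTopologicalGroup G₁] [PolishSpace G₁]
    (H : Subgroup G) (hH : IsClosed (H : Set G)) (hpre : QuotPrecompact H)
    (φ : G →* G₁) (hφ : Continuous φ) (hdense : Dense (Set.range φ)) :
    QuotPrecompact ((H.map φ).topologicalClosure) := by
  classical
  intro V₁ hV₁open hV₁mem hV₁sym
  obtain ⟨W, hWopen, hWmem, hWmul⟩ :=
    exists_open_nhds_one_mul_subset (hV₁open.mem_nhds hV₁mem)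
  set W₁ : Set G₁ := W ∩ W⁻¹ with hW₁def
  have hW₁open : IsOpen W₁ := hWopen.inter (hWopen.preimage continuous_inv)
  have hW₁mem : (1 : G₁) ∈ W₁ := ⟨hWmem, by simpa using hWmem⟩
  have hW₁sym : ∀ g ∈ W₁, g⁻¹ ∈ W₁ := fun g hg => ⟨hg.2, by simpa using hg.1⟩
  have hVopen : IsOpen (φ ⁻¹' W₁) := hW₁open.preimage hφ
  obtain ⟨t, ht⟩ := hpre (φ ⁻¹' W₁) hVopen (by simpa using hW₁mem)
    (fun g hg => by simpa using hW₁sym _ hg)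
  refine ⟨t.image φ, fun g₁ => ?_⟩
  have hexg : ∃ g : G, φ g * g₁⁻¹ ∈ W₁ := by
    have hopen : IsOpen {y : G₁ | y * g₁⁻¹ ∈ W₁} :=
      hW₁open.preimage (by continuity)
    have hmem : g₁ ∈ {y : G₁ | y * g₁⁻¹ ∈ W₁} := by simpa using hW₁mem
    obtain ⟨y, ⟨g, rfl⟩, hyW⟩ := hdense.exists_mem_open hopen ⟨g₁, hmem⟩
    exact ⟨g, hyW⟩
  obtain ⟨g, hg⟩ := hexg
  obtain ⟨x, hxt, v, hvV, h, hhH, hgeq⟩ := ht g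
  refine ⟨φ x, Finset.mem_image_of_mem φ hxt, (φ g * g₁⁻¹)⁻¹ * φ v, ?_, φ h, ?_, ?_⟩
  · exact hWmul (Set.mul_mem_mul (hW₁sym _ hg).1 hvV.1)
  · exact Subgroup.le_topologicalClosure _ (Subgroup.mem_map_of_mem φ hhH)
  · have h1 : φ g = φ v * φ x * φ h := by rw [hgeq]; simp [map_mul]
    rw [mul_assoc, mul_assoc, ← mul_assoc (φ v), ← h1]
    group
end
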